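/- arXiv:1901.09896 — 10 statements merged into one kernel-verified Lean document; each statement's English description precedes it below -/
import Mathlib

section
/- Let D be a positive squarefree integer and C a positive divisor of D. Then the sum, over all pairs (M, L) of positive divisors of D with M ≠ 1, D ∣ M·L and M·L ∣ D·C, of φ(gcd(M, L)) equals the sum, over all divisors d of D·C with d > 1, of φ(gcd(d, D·C/d)), where φ is Euler's totient function. -/
private lemma fle {a b : ℕ} (ha : a ≠ 0) (hb : b ≠ 0) (h : a ∣ b) (p : ℕ) :
    a.factorization p ≤ b.factorization p :=
  Finsupp.le_def.mp ((Nat.factorization_le_iff_dvd ha hb).mpr h) p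

private lemma dvd_of_fle {a b : ℕ} (ha : a ≠ 0) (hb : b ≠ 0)
    (h : ∀ p, a.factorization p ≤ b.factorization p) : a ∣ b :=
  (Nat.factorization_le_iff_dvd ha hb).mp (Finsupp.le_def.mpr h)

private lemma eq_of_feq {a b : ℕ} (ha : a ≠ 0) (hb : b ≠ 0)
    (h : ∀ p, a.factorization p = b.factorization p) : a = b :=
  Nat.factorization_inj ha hb (Finsupp.ext h)

private lemma fgcd {a b : ℕ} (ha : a ≠ 0) (hb : b ≠ 0) (p : ℕ) :
    (Nat.gcd a b).factorization p = min (a.factorization p) (b.factorization p) := by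
  rw [Nat.factorization_gcd ha hb, Finsupp.inf_apply]

private lemma fmul {a b : ℕ} (ha : a ≠ 0) (hb : b ≠ 0) (p : ℕ) :
    (a * b).factorization p = a.factorization p + b.factorization p := by
  rw [Nat.factorization_mul ha hb, Finsupp.add_apply]

private lemma fdiv {a b : ℕ} (h : b ∣ a) (p : ℕ) :
    (a / b).factorization p = a.factorization p - b.factorization p := by
  rw [Nat.factorization_div h, Finsupp.tsub_apply]

private lemma div_ne_zero' {a b : ℕ} (h : b ∣ a) (ha : a ≠ 0) : a / b ≠ 0 := by
  have hb : 0 < b := Nat.pos_of_ne_zero (fun hb => ha (by simpa [hb] using h))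
  exact (Nat.div_pos (Nat.le_of_dvd (Nat.pos_of_ne_zero ha) h) hb).ne'

private lemma gcd_ne_zero' {a b : ℕ} (ha : a ≠ 0) : Nat.gcd a b ≠ 0 :=
  fun h => ha (Nat.eq_zero_of_gcd_eq_zero_left h)

private lemma one_le_fact_of_prime_dvd {p n : ℕ} (hp : p.Prime) (hn : n ≠ 0) (h : p ∣ n) :
    1 ≤ n.factorization p :=
  (Nat.Prime.factorization_pos_of_dvd hp hn h)

private lemma one_lt_of_one_le_fact {p n : ℕ} (hp : p.Prime) (hn : n ≠ 0)
    (h : 1 ≤ n.factorization p) : 1 < n := by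
  have hpd : p ∣ n := Nat.dvd_of_factorization_pos (by omega)
  exact lt_of_lt_of_le hp.one_lt (Nat.le_of_dvd (Nat.pos_of_ne_zero hn) hpd)

/-- For `D` a positive squarefree integer and `C` a positive divisor of `D`,
the sum over pairs `(M, L)` of positive divisors of `D` with `M ≠ 1`, `D ∣ M·L` and
`M·L ∣ D·C` of `φ(gcd(M, L))` equals the sum over divisors `d > 1` of `D·C` of
`φ(gcd(d, D·C/d))`. -/
theorem stmt_0 (D C : ℕ) (hD : 0 < D) (hsq : Squarefree D) (hC : C ∣ D) (hC0 : 0 < C) :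
    ∑ q ∈ (D.divisors ×ˢ D.divisors).filter
        (fun q => q.1 ≠ 1 ∧ D ∣ q.1 * q.2 ∧ q.1 * q.2 ∣ D * C),
      Nat.totient (Nat.gcd q.1 q.2) =
    ∑ d ∈ (D * C).divisors.filter (fun d => 1 < d),
      Nat.totient (Nat.gcd d (D * C / d)) := by
  have hD0 : D ≠ 0 := hD.ne'
  have hC0' : C ≠ 0 := hC0.ne'
  have hN0 : D * C ≠ 0 := Nat.mul_ne_zero hD0 hC0'
  have hDle1 : ∀ p, D.factorization p ≤ 1 := fun p => hsq.natFactorization_le_one p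
  have hCleD : ∀ p, C.factorization p ≤ D.factorization p := fle hC0' hD0 hC
  -- the forward map and its factorization
  have ctxE : ∀ M L : ℕ, M ≠ 0 → L ≠ 0 →
      (M / Nat.gcd M L * Nat.gcd M C) ≠ 0 ∧
      (∀ p, (M / Nat.gcd M L * Nat.gcd M C).factorization p =
        M.factorization p - min (M.factorization p) (L.factorization p)
          + min (M.factorization p) (C.factorization p)) := by
    intro M L hM0 hL0
    have hg0 : Nat.gcd M L ≠ 0 := gcd_ne_zero' hM0
    have hgM : Nat.gcd M L ∣ M := Nat.gcd_dvd_left M L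
    have hdiv0 : M / Nat.gcd M L ≠ 0 := div_ne_zero' hgM hM0
    have hc0 : Nat.gcd M C ≠ 0 := gcd_ne_zero' hM0
    refine ⟨Nat.mul_ne_zero hdiv0 hc0, fun p => ?_⟩
    rw [fmul hdiv0 hc0 p, fdiv hgM p, fgcd hM0 hL0 p, fgcd hM0 hC0' p]
  refine Finset.sum_nbij' (i := fun q => q.1 / Nat.gcd q.1 q.2 * Nat.gcd q.1 C)
    (j := fun d => (Nat.gcd d D, D / (d / Nat.gcd d C))) ?_ ?_ ?_ ?_ ?_
  · -- hi : forward map lands in the divisor set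
    rintro ⟨M, L⟩ hq
    simp only [Finset.mem_filter, Finset.mem_product, Nat.mem_divisors] at hq ⊢
    obtain ⟨⟨⟨hM, -⟩, hL, -⟩, hM1, h1, h2⟩ := hq
    have hM0 : M ≠ 0 := fun h => hD0 (by simpa [h] using hM)
    have hL0 : L ≠ 0 := fun h => hD0 (by simpa [h] using hL)
    have hML0 : M * L ≠ 0 := Nat.mul_ne_zero hM0 hL0
    obtain ⟨hE0, hEf⟩ := ctxE M L hM0 hL0
    have hm : ∀ p, M.factorization p ≤ D.factorization p := fle hM0 hD0 hM
    have hl : ∀ p, L.factorization p ≤ D.factorization p := fle hL0 hD0 hL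
    have hml : ∀ p, D.factorization p ≤ M.factorization p + L.factorization p := by
      intro p; have := fle hD0 hML0 h1 p; rwa [fmul hM0 hL0 p] at this
    have hmln : ∀ p, M.factorization p + L.factorization p ≤
        D.factorization p + C.factorization p := by
      intro p; have := fle hML0 hN0 h2 p; rwa [fmul hM0 hL0 p, fmul hD0 hC0' p] at this
    constructor
    · refine ⟨dvd_of_fle hE0 hN0 fun p => ?_, hN0⟩
      rw [hEf p, fmul hD0 hC0' p]
      have := hm p; have := hl p; have := hml p; have := hmln p
      have := hDle1 p; have := hCleD p
      omega
    · obtain ⟨p, hp, hpd⟩ := Nat.exists_prime_and_dvd hM1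
      have h1m : 1 ≤ M.factorization p := one_le_fact_of_prime_dvd hp hM0 hpd
      refine one_lt_of_one_le_fact hp hE0 ?_
      rw [hEf p]
      have := hm p; have := hl p; have := hml p; have := hmln p
      have := hDle1 p; have := hCleD p
      omega
  · -- hj : inverse map lands in the pair set
    intro d hd
    simp only [Finset.mem_filter, Finset.mem_product, Nat.mem_divisors] at hd ⊢
    obtain ⟨⟨hdN, -⟩, hd1⟩ := hd
    have hd0 : d ≠ 0 := by omega
    have hx : ∀ p, d.factorization p ≤ D.factorization p + C.factorization p := by
      intro p; have := fle hd0 hN0 hdN p; rwa [fmul hD0 hC0' p] at this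
    have hgC : Nat.gcd d C ∣ d := Nat.gcd_dvd_left d C
    have hq0 : d / Nat.gcd d C ≠ 0 := div_ne_zero' hgC hd0
    have hqf : ∀ p, (d / Nat.gcd d C).factorization p =
        d.factorization p - min (d.factorization p) (C.factorization p) := by
      intro p; rw [fdiv hgC p, fgcd hd0 hC0' p]
    have hqD : d / Nat.gcd d C ∣ D := by
      refine dvd_of_fle hq0 hD0 fun p => ?_
      rw [hqf p]; have := hx p; have := hDle1 p; have := hCleD p; omega
    have hL0 : D / (d / Nat.gcd d C) ≠ 0 := div_ne_zero' hqD hD0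
    have hLf : ∀ p, (D / (d / Nat.gcd d C)).factorization p =
        D.factorization p - (d.factorization p - min (d.factorization p)
          (C.factorization p)) := by
      intro p; rw [fdiv hqD p, hqf p]
    have hM0 : Nat.gcd d D ≠ 0 := gcd_ne_zero' hd0
    have hMf : ∀ p, (Nat.gcd d D).factorization p =
        min (d.factorization p) (D.factorization p) := fgcd hd0 hD0
    have hML0 : Nat.gcd d D * (D / (d / Nat.gcd d C)) ≠ 0 := Nat.mul_ne_zero hM0 hL0
    refine ⟨⟨⟨Nat.gcd_dvd_right d D, hD0⟩, Nat.div_dvd_of_dvd hqD, hD0⟩, ?_, ?_, ?_⟩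
    · -- gcd d D ≠ 1
      obtain ⟨p, hp, hpd⟩ := Nat.exists_prime_and_dvd (by omega : d ≠ 1)
      have h1x : 1 ≤ d.factorization p := one_le_fact_of_prime_dvd hp hd0 hpd
      have : 1 < Nat.gcd d D := by
        refine one_lt_of_one_le_fact hp hM0 ?_
        rw [hMf p]; have := hx p; have := hDle1 p; have := hCleD p; omega
      omega
    · refine dvd_of_fle hD0 hML0 fun p => ?_
      rw [fmul hM0 hL0 p, hMf p, hLf p]
      have := hx p; have := hDle1 p; have := hCleD p; omega
    · refine dvd_of_fle hML0 hN0 fun p => ?_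
      rw [fmul hM0 hL0 p, hMf p, hLf p, fmul hD0 hC0' p]
      have := hx p; have := hDle1 p; have := hCleD p; omega
  · -- left inverse
    rintro ⟨M, L⟩ hq
    simp only [Finset.mem_filter, Finset.mem_product, Nat.mem_divisors] at hq
    obtain ⟨⟨⟨hM, -⟩, hL, -⟩, hM1, h1, h2⟩ := hq
    have hM0 : M ≠ 0 := fun h => hD0 (by simpa [h] using hM)
    have hL0 : L ≠ 0 := fun h => hD0 (by simpa [h] using hL)
    have hML0 : M * L ≠ 0 := Nat.mul_ne_zero hM0 hL0
    obtain ⟨hE0, hEf⟩ := ctxE M L hM0 hL0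
    set E := M / Nat.gcd M L * Nat.gcd M C with hEdef
    have hm : ∀ p, M.factorization p ≤ D.factorization p := fle hM0 hD0 hM
    have hl : ∀ p, L.factorization p ≤ D.factorization p := fle hL0 hD0 hL
    have hml : ∀ p, D.factorization p ≤ M.factorization p + L.factorization p := by
      intro p; have := fle hD0 hML0 h1 p; rwa [fmul hM0 hL0 p] at this
    have hmln : ∀ p, M.factorization p + L.factorization p ≤
        D.factorization p + C.factorization p := by
      intro p; have := fle hML0 hN0 h2 p; rwa [fmul hM0 hL0 p, fmul hD0 hC0' p] at this
    have hgC : Nat.gcd E C ∣ E := Nat.gcd_dvd_left E C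
    have hq0 : E / Nat.gcd E C ≠ 0 := div_ne_zero' hgC hE0
    have hqf : ∀ p, (E / Nat.gcd E C).factorization p =
        E.factorization p - min (E.factorization p) (C.factorization p) := by
      intro p; rw [fdiv hgC p, fgcd hE0 hC0' p]
    have hqD : E / Nat.gcd E C ∣ D := by
      refine dvd_of_fle hq0 hD0 fun p => ?_
      rw [hqf p, hEf p]
      have := hm p; have := hl p; have := hml p; have := hmln p
      have := hDle1 p; have := hCleD p; omega
    have hL0' : D / (E / Nat.gcd E C) ≠ 0 := div_ne_zero' hqD hD0
    have e1 : Nat.gcd E D = M := by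
      refine eq_of_feq (gcd_ne_zero' hE0) hM0 fun p => ?_
      rw [fgcd hE0 hD0 p, hEf p]
      have := hm p; have := hl p; have := hml p; have := hmln p
      have := hDle1 p; have := hCleD p; omega
    have e2 : D / (E / Nat.gcd E C) = L := by
      refine eq_of_feq hL0' hL0 fun p => ?_
      rw [fdiv hqD p, hqf p, hEf p]
      have := hm p; have := hl p; have := hml p; have := hmln p
      have := hDle1 p; have := hCleD p; omega
    exact Prod.ext e1 e2
  · -- right inverse
    intro d hd
    simp only [Finset.mem_filter, Nat.mem_divisors] at hd
    obtain ⟨⟨hdN, -⟩, hd1⟩ := hd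
    have hd0 : d ≠ 0 := by omega
    have hx : ∀ p, d.factorization p ≤ D.factorization p + C.factorization p := by
      intro p; have := fle hd0 hN0 hdN p; rwa [fmul hD0 hC0' p] at this
    have hgC : Nat.gcd d C ∣ d := Nat.gcd_dvd_left d C
    have hq0 : d / Nat.gcd d C ≠ 0 := div_ne_zero' hgC hd0
    have hqf : ∀ p, (d / Nat.gcd d C).factorization p =
        d.factorization p - min (d.factorization p) (C.factorization p) := by
      intro p; rw [fdiv hgC p, fgcd hd0 hC0' p]
    have hqD : d / Nat.gcd d C ∣ D := by
      refine dvd_of_fle hq0 hD0 fun p => ?_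
      rw [hqf p]; have := hx p; have := hDle1 p; have := hCleD p; omega
    have hL0 : D / (d / Nat.gcd d C) ≠ 0 := div_ne_zero' hqD hD0
    have hLf : ∀ p, (D / (d / Nat.gcd d C)).factorization p =
        D.factorization p - (d.factorization p - min (d.factorization p)
          (C.factorization p)) := by
      intro p; rw [fdiv hqD p, hqf p]
    have hM0 : Nat.gcd d D ≠ 0 := gcd_ne_zero' hd0
    have hMf : ∀ p, (Nat.gcd d D).factorization p =
        min (d.factorization p) (D.factorization p) := fgcd hd0 hD0
    obtain ⟨hE0, hEf⟩ := ctxE (Nat.gcd d D) (D / (d / Nat.gcd d C)) hM0 hL0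
    refine eq_of_feq hE0 hd0 fun p => ?_
    rw [hEf p, hMf p, hLf p]
    have := hx p; have := hDle1 p; have := hCleD p; omega
  · -- equality of summands
    rintro ⟨M, L⟩ hq
    simp only [Finset.mem_filter, Finset.mem_product, Nat.mem_divisors] at hq
    obtain ⟨⟨⟨hM, -⟩, hL, -⟩, hM1, h1, h2⟩ := hq
    have hM0 : M ≠ 0 := fun h => hD0 (by simpa [h] using hM)
    have hL0 : L ≠ 0 := fun h => hD0 (by simpa [h] using hL)
    have hML0 : M * L ≠ 0 := Nat.mul_ne_zero hM0 hL0
    obtain ⟨hE0, hEf⟩ := ctxE M L hM0 hL0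
    set E := M / Nat.gcd M L * Nat.gcd M C with hEdef
    have hm : ∀ p, M.factorization p ≤ D.factorization p := fle hM0 hD0 hM
    have hl : ∀ p, L.factorization p ≤ D.factorization p := fle hL0 hD0 hL
    have hml : ∀ p, D.factorization p ≤ M.factorization p + L.factorization p := by
      intro p; have := fle hD0 hML0 h1 p; rwa [fmul hM0 hL0 p] at this
    have hmln : ∀ p, M.factorization p + L.factorization p ≤
        D.factorization p + C.factorization p := by
      intro p; have := fle hML0 hN0 h2 p; rwa [fmul hM0 hL0 p, fmul hD0 hC0' p] at this
    have hEN : E ∣ D * C := by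
      refine dvd_of_fle hE0 hN0 fun p => ?_
      rw [hEf p, fmul hD0 hC0' p]
      have := hm p; have := hl p; have := hml p; have := hmln p
      have := hDle1 p; have := hCleD p; omega
    have hNE0 : D * C / E ≠ 0 := div_ne_zero' hEN hN0
    congr 1
    refine eq_of_feq (gcd_ne_zero' hM0) (gcd_ne_zero' hE0) fun p => ?_
    rw [fgcd hM0 hL0 p, fgcd hE0 hNE0 p, fdiv hEN p, fmul hD0 hC0' p, hEf p]
    have := hm p; have := hl p; have := hml p; have := hmln p
    have := hDle1 p; have := hCleD p; omega
end

section
/- Let D be a positive squarefree integer and C a positive divisor of D. There exists a bijection e from the set of positive divisors of D·C onto the set of pairs (M, L) of positive divisors of D satisfying D ∣ M·L and M·L ∣ D·C, such that gcd(d, D·C/d) = gcd(M, L) whenever e(d) = (M, L), and such that e(1) = (1, D). -/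
/-- For `D` a positive squarefree integer and `C` a positive divisor of `D`,
there is a bijection `e` from the divisors of `D·C` onto the pairs `(M, L)` of divisors of
`D` with `D ∣ M·L` and `M·L ∣ D·C`, such that `gcd(d, D·C/d) = gcd(M, L)` whenever
`e(d) = (M, L)`, and `e(1) = (1, D)`. -/
theorem stmt_2 (D C : ℕ) (hD : 0 < D) (hsq : Squarefree D) (hC : C ∣ D) (hC0 : 0 < C) :
    ∃ e : ℕ → ℕ × ℕ,
      Set.BijOn e ((D * C).divisors : Set ℕ)
        (((D.divisors ×ˢ D.divisors).filter
            (fun q => D ∣ q.1 * q.2 ∧ q.1 * q.2 ∣ D * C) : Finset (ℕ × ℕ)) : Set (ℕ × ℕ)) ∧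
      (∀ d ∈ (D * C).divisors, Nat.gcd d (D * C / d) = Nat.gcd (e d).1 (e d).2) ∧
      e 1 = (1, D) := by
  have hD0 : D ≠ 0 := hD.ne'
  have hC0' : C ≠ 0 := hC0.ne'
  have hDC0 : D * C ≠ 0 := mul_ne_zero hD0 hC0'
  have hDle : ∀ p, D.factorization p ≤ 1 :=
    (Nat.squarefree_iff_factorization_le_one hD0).mp hsq
  have hCle : ∀ p, C.factorization p ≤ D.factorization p := fun p =>
    (Nat.factorization_le_iff_dvd hC0' hD0).mpr hC p
  have hfDC : ∀ p, (D * C).factorization p = D.factorization p + C.factorization p := by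
    intro p; rw [Nat.factorization_mul hD0 hC0']; rfl
  -- factorization of a gcd with D
  have hgcdf : ∀ x : ℕ, x ≠ 0 → ∀ p,
      (Nat.gcd x D).factorization p = min (x.factorization p) (D.factorization p) := by
    intro x hx p
    rw [Nat.factorization_gcd hx hD0, Finsupp.inf_apply]
  -- factorization of D*C/x for x ∣ D*C
  have hdivf : ∀ x : ℕ, x ∣ D * C → ∀ p,
      (D * C / x).factorization p
        = D.factorization p + C.factorization p - x.factorization p := by
    intro x hx p
    rw [Nat.factorization_div hx, Finsupp.tsub_apply, hfDC]
  refine ⟨fun d => (Nat.gcd d D, Nat.gcd (D * C / d) D), ⟨?_, ?_, ?_⟩, ?_, ?_⟩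
  · -- MapsTo
    intro d hd
    simp only [Finset.coe_filter, Set.mem_setOf_eq, Finset.mem_coe, Nat.mem_divisors,
      Finset.mem_product] at hd ⊢
    obtain ⟨hdvd, -⟩ := hd
    have hd0 : d ≠ 0 := by rintro rfl; exact hDC0 (Nat.eq_zero_of_zero_dvd hdvd)
    have hq0 : D * C / d ≠ 0 := Nat.div_ne_zero_iff_of_dvd hdvd |>.mpr ⟨hDC0, hd0⟩
    have hdle : ∀ p, d.factorization p ≤ D.factorization p + C.factorization p := by
      intro p
      have := (Nat.factorization_le_iff_dvd hd0 hDC0).mpr hdvd p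
      rwa [hfDC p] at this
    have g1 : Nat.gcd d D ≠ 0 := Nat.gcd_ne_zero_right hD0
    have g2 : Nat.gcd (D * C / d) D ≠ 0 := Nat.gcd_ne_zero_right hD0
    refine ⟨⟨⟨Nat.gcd_dvd_right _ _, hD0⟩, ⟨Nat.gcd_dvd_right _ _, hD0⟩⟩, ?_, ?_⟩
    · rw [← Nat.factorization_le_iff_dvd hD0 (mul_ne_zero g1 g2)]
      intro p
      rw [Nat.factorization_mul g1 g2, Finsupp.add_apply, hgcdf _ hd0, hgcdf _ hq0,
        hdivf _ hdvd]
      have := hdle p; have := hDle p; have := hCle p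
      omega
    · rw [← Nat.factorization_le_iff_dvd (mul_ne_zero g1 g2) hDC0]
      intro p
      rw [Nat.factorization_mul g1 g2, Finsupp.add_apply, hgcdf _ hd0, hgcdf _ hq0,
        hdivf _ hdvd, hfDC]
      have := hdle p; have := hDle p; have := hCle p
      omega
  · -- InjOn
    intro d1 h1 d2 h2 heq
    simp only [Finset.mem_coe, Nat.mem_divisors] at h1 h2
    obtain ⟨hdvd1, -⟩ := h1
    obtain ⟨hdvd2, -⟩ := h2
    have hd10 : d1 ≠ 0 := by rintro rfl; exact hDC0 (Nat.eq_zero_of_zero_dvd hdvd1)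
    have hd20 : d2 ≠ 0 := by rintro rfl; exact hDC0 (Nat.eq_zero_of_zero_dvd hdvd2)
    refine Nat.eq_of_factorization_eq hd10 hd20 fun p => ?_
    have e1 := congrArg (fun q : ℕ × ℕ => (q.1).factorization p) heq
    have e2 := congrArg (fun q : ℕ × ℕ => (q.2).factorization p) heq
    simp only [hgcdf _ hd10, hgcdf _ hd20] at e1
    have hq10 : D * C / d1 ≠ 0 := Nat.div_ne_zero_iff_of_dvd hdvd1 |>.mpr ⟨hDC0, hd10⟩
    have hq20 : D * C / d2 ≠ 0 := Nat.div_ne_zero_iff_of_dvd hdvd2 |>.mpr ⟨hDC0, hd20⟩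
    simp only [hgcdf _ hq10, hgcdf _ hq20, hdivf _ hdvd1, hdivf _ hdvd2] at e2
    have hle1 : ∀ q, d1.factorization q ≤ D.factorization q + C.factorization q := by
      intro q
      have := (Nat.factorization_le_iff_dvd hd10 hDC0).mpr hdvd1 q
      rwa [hfDC q] at this
    have hle2 : ∀ q, d2.factorization q ≤ D.factorization q + C.factorization q := by
      intro q
      have := (Nat.factorization_le_iff_dvd hd20 hDC0).mpr hdvd2 q
      rwa [hfDC q] at this
    have := hle1 p; have := hle2 p; have := hDle p; have := hCle p
    omega
  · -- SurjOn
    rintro ⟨M, L⟩ hq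
    simp only [Finset.coe_filter, Set.mem_setOf_eq, Finset.mem_product, Nat.mem_divisors] at hq
    obtain ⟨⟨⟨hM, -⟩, ⟨hL, -⟩⟩, hDML, hMLDC⟩ := hq
    have hM0 : M ≠ 0 := fun h => hD0 (Nat.eq_zero_of_zero_dvd (h ▸ hM))
    have hL0 : L ≠ 0 := fun h => hD0 (Nat.eq_zero_of_zero_dvd (h ▸ hL))
    have hML0 : M * L ≠ 0 := mul_ne_zero hM0 hL0
    set R := D * C / (M * L) with hR
    have hR0 : R ≠ 0 := Nat.div_ne_zero_iff_of_dvd hMLDC |>.mpr ⟨hDC0, hML0⟩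
    have hRf : ∀ p, R.factorization p
        = D.factorization p + C.factorization p - (M.factorization p + L.factorization p) := by
      intro p
      rw [hR, Nat.factorization_div hMLDC, Finsupp.tsub_apply, hfDC,
        Nat.factorization_mul hM0 hL0, Finsupp.add_apply]
    have hg0 : Nat.gcd M R ≠ 0 := Nat.gcd_ne_zero_left hM0
    have hgf : ∀ p, (Nat.gcd M R).factorization p
        = min (M.factorization p) (R.factorization p) := by
      intro p
      rw [Nat.factorization_gcd hM0 hR0, Finsupp.inf_apply]
    set d := M * Nat.gcd M R with hd
    have hd0 : d ≠ 0 := mul_ne_zero hM0 hg0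
    have hdf : ∀ p, d.factorization p
        = M.factorization p + min (M.factorization p) (R.factorization p) := by
      intro p
      rw [hd, Nat.factorization_mul hM0 hg0, Finsupp.add_apply, hgf]
    -- pointwise facts
    have hMle : ∀ p, M.factorization p ≤ D.factorization p := fun p =>
      (Nat.factorization_le_iff_dvd hM0 hD0).mpr hM p
    have hLle : ∀ p, L.factorization p ≤ D.factorization p := fun p =>
      (Nat.factorization_le_iff_dvd hL0 hD0).mpr hL p
    have hDMLf : ∀ p, D.factorization p ≤ M.factorization p + L.factorization p := by
      intro p
      have := (Nat.factorization_le_iff_dvd hD0 hML0).mpr hDML p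
      rwa [Nat.factorization_mul hM0 hL0, Finsupp.add_apply] at this
    have hMLDCf : ∀ p,
        M.factorization p + L.factorization p
          ≤ D.factorization p + C.factorization p := by
      intro p
      have := (Nat.factorization_le_iff_dvd hML0 hDC0).mpr hMLDC p
      rwa [Nat.factorization_mul hM0 hL0, Finsupp.add_apply, hfDC] at this
    have hddvd : d ∣ D * C := by
      rw [← Nat.factorization_le_iff_dvd hd0 hDC0]
      intro p
      rw [hdf, hfDC]
      have := hRf p; have := hMLDCf p
      omega
    refine ⟨d, ?_, ?_⟩
    · simp only [Finset.mem_coe, Nat.mem_divisors]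
      exact ⟨hddvd, hDC0⟩
    · have hq0 : D * C / d ≠ 0 := Nat.div_ne_zero_iff_of_dvd hddvd |>.mpr ⟨hDC0, hd0⟩
      have c1 : Nat.gcd d D = M := by
        refine Nat.eq_of_factorization_eq (Nat.gcd_ne_zero_right hD0) hM0 fun p => ?_
        rw [hgcdf _ hd0, hdf]
        have := hRf p; have := hMLDCf p; have := hDMLf p
        have := hMle p; have := hLle p; have := hDle p; have := hCle p
        omega
      have c2 : Nat.gcd (D * C / d) D = L := by
        refine Nat.eq_of_factorization_eq (Nat.gcd_ne_zero_right hD0) hL0 fun p => ?_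
        rw [hgcdf _ hq0, hdivf _ hddvd, hdf]
        have := hRf p; have := hMLDCf p; have := hDMLf p
        have := hMle p; have := hLle p; have := hDle p; have := hCle p
        omega
      exact Prod.ext c1 c2
  · -- gcd condition
    intro d hd
    simp only [Nat.mem_divisors] at hd
    obtain ⟨hdvd, -⟩ := hd
    have hd0 : d ≠ 0 := by rintro rfl; exact hDC0 (Nat.eq_zero_of_zero_dvd hdvd)
    have hq0 : D * C / d ≠ 0 := Nat.div_ne_zero_iff_of_dvd hdvd |>.mpr ⟨hDC0, hd0⟩
    have g1 : Nat.gcd d D ≠ 0 := Nat.gcd_ne_zero_right hD0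
    have g2 : Nat.gcd (D * C / d) D ≠ 0 := Nat.gcd_ne_zero_right hD0
    refine Nat.eq_of_factorization_eq (Nat.gcd_ne_zero_left hd0)
      (Nat.gcd_ne_zero_left g1) fun p => ?_
    have hgg : (Nat.gcd (Nat.gcd d D) (Nat.gcd (D * C / d) D)).factorization p
        = min ((Nat.gcd d D).factorization p) ((Nat.gcd (D * C / d) D).factorization p) := by
      rw [Nat.factorization_gcd g1 g2, Finsupp.inf_apply]
    rw [hgg, hgcdf _ hd0, hgcdf _ hq0, hdivf _ hdvd]
    have hgd : (Nat.gcd d (D * C / d)).factorization p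
        = min (d.factorization p) ((D * C / d).factorization p) := by
      rw [Nat.factorization_gcd hd0 hq0, Finsupp.inf_apply]
    rw [hgd, hdivf _ hdvd]
    have hdle : d.factorization p ≤ D.factorization p + C.factorization p := by
      have := (Nat.factorization_le_iff_dvd hd0 hDC0).mpr hdvd p
      rwa [hfDC p] at this
    have := hDle p; have := hCle p
    omega
  · -- e 1 = (1, D)
    simp [Nat.gcd_eq_right (dvd_mul_right D C)]
end

section
/- Let D be a positive squarefree integer and C a positive divisor of D. The map (r, s, t) ↦ r·s²·t is a bijection from the set of triples of positive integers (r, s, t) with r ∣ D/C, s ∣ C, t ∣ C and gcd(s, t) = 1 onto the set of positive divisors of D·C. Moreover, for every such triple, gcd(r·s²·t, (D·C)/(r·s²·t)) = t. -/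
private lemma cop_of_mul_dvd {a b n : ℕ} (hn : Squarefree n) (h : a * b ∣ n) :
    Nat.Coprime a b :=
  Nat.coprime_of_squarefree_mul (hn.squarefree_of_dvd h)

/-- decomposition of a divisor of C^2 for squarefree C -/
private lemma decomp {C m : ℕ} (hC0 : C ≠ 0) (hCsq : Squarefree C) (hm : m ∣ C ^ 2) :
    ∃ s t, s ∣ C ∧ t ∣ C ∧ Nat.gcd s t = 1 ∧ s ^ 2 * t = m := by
  have hm0 : m ≠ 0 := ne_zero_of_dvd_ne_zero (pow_ne_zero 2 hC0) hm
  set g := Nat.gcd m C with hg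
  have hgm : g ∣ m := Nat.gcd_dvd_left m C
  have hgC : g ∣ C := Nat.gcd_dvd_right m C
  have hg0 : g ≠ 0 := Nat.gcd_ne_zero_left hm0
  set s := m / g with hs
  have hs0 : s ≠ 0 := by
    rw [hs]
    exact Nat.div_ne_zero_iff_of_dvd hgm |>.mpr ⟨hm0, hg0⟩
  have hsg : s ∣ g := by
    rw [← Nat.factorization_le_iff_dvd hs0 hg0, hs, Nat.factorization_div hgm, hg,
      Nat.factorization_gcd hm0 hC0]
    intro p
    have h1 : C.factorization p ≤ 1 := hCsq.natFactorization_le_one p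
    have h2 : m.factorization p ≤ (C ^ 2).factorization p :=
      (Nat.factorization_le_iff_dvd hm0 (pow_ne_zero 2 hC0)).mpr hm p
    rw [Nat.factorization_pow] at h2
    simp only [Finsupp.coe_tsub, Pi.sub_apply, Finsupp.inf_apply, Finsupp.smul_apply,
      smul_eq_mul] at *
    omega
  refine ⟨s, g / s, dvd_trans ?_ hgC, dvd_trans (Nat.div_dvd_of_dvd hsg) hgC, ?_, ?_⟩
  · exact hsg
  · exact cop_of_mul_dvd hCsq (dvd_trans (by rw [Nat.mul_div_cancel' hsg]) hgC)
  · rw [pow_two, mul_assoc, Nat.mul_div_cancel' hsg, hs, Nat.div_mul_cancel hgm]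

/-- the gcd formula -/
private lemma gcd_formula {E C r s t : ℕ} (hE0 : E ≠ 0) (hC0 : C ≠ 0)
    (hEsq : Squarefree E) (hCsq : Squarefree C) (hEC : Nat.Coprime E C)
    (hr : r ∣ E) (hs : s ∣ C) (ht : t ∣ C) (hst : Nat.gcd s t = 1) :
    Nat.gcd (r * s ^ 2 * t) (E * C ^ 2 / (r * s ^ 2 * t)) = t := by
  have hstC : s * t ∣ C := Nat.Coprime.mul_dvd_of_dvd_of_dvd hst hs ht
  set u := C / (s * t) with hu
  have hC : C = s * t * u := (Nat.mul_div_cancel' hstC).symm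
  have hE : E = r * (E / r) := (Nat.mul_div_cancel' hr).symm
  have hr0 : r ≠ 0 := fun h => hE0 (by simpa [h] using hE)
  have hs0 : s ≠ 0 := fun h => hC0 (by rw [hC, h]; ring)
  have ht0 : t ≠ 0 := fun h => hC0 (by rw [hC, h]; ring)
  have hdiv : E * C ^ 2 / (r * s ^ 2 * t) = E / r * (t * u ^ 2) := by
    rw [Nat.div_eq_iff_eq_mul_left (by positivity) ?hd]
    · rw [hC]; nth_rewrite 1 [hE]; ring
    case hd => exact ⟨E / r * (t * u ^ 2), by rw [hC]; nth_rewrite 1 [hE]; ring⟩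
  rw [hdiv]
  -- coprimalities
  have hrE : Nat.Coprime r (E / r) := cop_of_mul_dvd hEsq (by rw [← hE])
  have hsu : Nat.Coprime s u := cop_of_mul_dvd hCsq ⟨t, by rw [hC]; ring⟩
  have hEC' : ∀ a b : ℕ, a ∣ E → b ∣ C → Nat.Coprime a b := fun a b ha hb =>
    Nat.Coprime.coprime_dvd_right hb (Nat.Coprime.coprime_dvd_left ha hEC)
  have huC : u ∣ C := ⟨s * t, by rw [hC]; ring⟩
  have key : Nat.Coprime (r * s ^ 2) (E / r * u ^ 2) := by
    apply Nat.Coprime.mul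
    · exact Nat.Coprime.mul_right hrE ((hEC' r u hr huC).pow_right 2)
    · apply Nat.Coprime.mul_right
      · exact ((hEC' (E / r) s (Nat.div_dvd_of_dvd hr) hs).symm).pow_left 2
      · exact (hsu.pow 2 2)
  calc Nat.gcd (r * s ^ 2 * t) (E / r * (t * u ^ 2))
      = Nat.gcd (t * (r * s ^ 2)) (t * (E / r * u ^ 2)) := by ring_nf
    _ = t * Nat.gcd (r * s ^ 2) (E / r * u ^ 2) := Nat.gcd_mul_left t _ _
    _ = t := by rw [key]; exact mul_one t

/-- For `D` a positive squarefree integer and `C` a positive divisor of `D`,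
the map `(r, s, t) ↦ r·s²·t` is a bijection from the set of triples of positive integers
with `r ∣ D/C`, `s ∣ C`, `t ∣ C` and `gcd(s, t) = 1` onto the divisors of `D·C`, and for
every such triple `gcd(r·s²·t, (D·C)/(r·s²·t)) = t`. -/
theorem stmt_3 (D C : ℕ) (hD : 0 < D) (hsq : Squarefree D) (hC : C ∣ D) (hC0 : 0 < C) :
    Set.BijOn (fun x : ℕ × ℕ × ℕ => x.1 * x.2.1 ^ 2 * x.2.2)
      ((((D / C).divisors ×ˢ C.divisors ×ˢ C.divisors).filter
          (fun x => Nat.gcd x.2.1 x.2.2 = 1) : Finset (ℕ × ℕ × ℕ)) : Set (ℕ × ℕ × ℕ))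
      (((D * C).divisors : Finset ℕ) : Set ℕ) ∧
    ∀ r s t : ℕ, r ∣ D / C → s ∣ C → t ∣ C → Nat.gcd s t = 1 →
      Nat.gcd (r * s ^ 2 * t) (D * C / (r * s ^ 2 * t)) = t := by
  set E := D / C with hEdef
  have hECmul : E * C = D := Nat.div_mul_cancel hC
  have hC0' : C ≠ 0 := hC0.ne'
  have hE0 : E ≠ 0 := fun h => hD.ne' (by rw [← hECmul, h, zero_mul])
  have hD0 : D ≠ 0 := hD.ne'
  have hsqEC : Squarefree (E * C) := hECmul ▸ hsq
  have hEC : Nat.Coprime E C := Nat.coprime_of_squarefree_mul hsqEC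
  have hEsq : Squarefree E := (Nat.squarefree_mul_iff.mp hsqEC).2.1
  have hCsq : Squarefree C := (Nat.squarefree_mul_iff.mp hsqEC).2.2
  have hDC : D * C = E * C ^ 2 := by rw [← hECmul]; ring
  have part2 : ∀ r s t : ℕ, r ∣ E → s ∣ C → t ∣ C → Nat.gcd s t = 1 →
      Nat.gcd (r * s ^ 2 * t) (D * C / (r * s ^ 2 * t)) = t := by
    intro r s t hr hs ht hst
    rw [hDC]
    exact gcd_formula hE0 hC0' hEsq hCsq hEC hr hs ht hst
  refine ⟨⟨?_, ?_, ?_⟩, part2⟩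
  · -- MapsTo
    intro x hx
    simp only [Finset.coe_filter, Set.mem_setOf_eq, Finset.mem_product, Nat.mem_divisors] at hx
    obtain ⟨⟨⟨hr, -⟩, ⟨hs, -⟩, ht, -⟩, hst⟩ := hx
    simp only [Finset.mem_coe, Nat.mem_divisors]
    refine ⟨?_, by positivity⟩
    rw [hDC]
    have : x.2.1 ^ 2 * x.2.2 ∣ C ^ 2 := by
      rw [pow_two, pow_two, mul_assoc]
      exact mul_dvd_mul hs (Nat.Coprime.mul_dvd_of_dvd_of_dvd hst hs ht)
    rw [mul_assoc]
    exact mul_dvd_mul hr this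
  · -- InjOn
    intro x hx y hy hxy
    simp only [Finset.coe_filter, Set.mem_setOf_eq, Finset.mem_product, Nat.mem_divisors] at hx hy
    obtain ⟨⟨⟨hxr, -⟩, ⟨hxs, -⟩, hxt, -⟩, hxst⟩ := hx
    obtain ⟨⟨⟨hyr, -⟩, ⟨hys, -⟩, hyt, -⟩, hyst⟩ := hy
    obtain ⟨r, s, t⟩ := x
    obtain ⟨r', s', t'⟩ := y
    simp only at hxy hxr hxs hxt hxst hyr hys hyt hyst ⊢
    -- t = t'
    have ht : t = t' := by
      have h1 := part2 r s t hxr hxs hxt hxst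
      have h2 := part2 r' s' t' hyr hys hyt hyst
      rw [← h1, ← h2, hxy]
    -- r = r'
    have hr0 : r ≠ 0 := fun h => hE0 (zero_dvd_iff.mp (h ▸ hxr))
    have hcop : ∀ s t : ℕ, s ∣ C → t ∣ C → Nat.Coprime (s ^ 2 * t) E := fun s t hs ht =>
      Nat.Coprime.mul (((hEC.symm.coprime_dvd_left hs).pow_left 2))
        (hEC.symm.coprime_dvd_left ht)
    have hr : r = r' := by
      have e1 : Nat.gcd E (r * s ^ 2 * t) = r := by
        rw [mul_assoc, Nat.Coprime.gcd_mul_right_cancel_right r (hcop s t hxs hxt)]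
        exact Nat.gcd_eq_right hxr
      have e2 : Nat.gcd E (r' * s' ^ 2 * t') = r' := by
        rw [mul_assoc, Nat.Coprime.gcd_mul_right_cancel_right r' (hcop s' t' hys hyt)]
        exact Nat.gcd_eq_right hyr
      rw [← e1, ← e2, hxy]
    have ht0 : t ≠ 0 := fun h => hC0' (zero_dvd_iff.mp (h ▸ hxt))
    have hs : s = s' := by
      have : r * s ^ 2 * t = r * s' ^ 2 * t := by rw [hxy, hr, ht]
      have hsq : s ^ 2 = s' ^ 2 := by
        have := Nat.eq_of_mul_eq_mul_right (Nat.pos_of_ne_zero ht0)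
          (by exact this)
        exact Nat.eq_of_mul_eq_mul_left (Nat.pos_of_ne_zero hr0) this
      exact Nat.pow_left_injective (by norm_num) hsq
    rw [hr, hs, ht]
  · -- SurjOn
    intro n hn
    simp only [Finset.mem_coe, Nat.mem_divisors] at hn
    obtain ⟨hnd, -⟩ := hn
    rw [hDC] at hnd
    obtain ⟨r, m, hr, hm, rfl⟩ := exists_dvd_and_dvd_of_dvd_mul hnd
    obtain ⟨s, t, hs, ht, hst, hm'⟩ := decomp hC0' hCsq hm
    refine ⟨⟨r, s, t⟩, ?_, ?_⟩
    · simp only [Finset.coe_filter, Set.mem_setOf_eq, Finset.mem_product, Nat.mem_divisors]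
      exact ⟨⟨⟨hr, hE0⟩, ⟨hs, hC0'⟩, ht, hC0'⟩, hst⟩
    · simp only
      rw [mul_assoc, hm']
end

section
/- Let D be a positive squarefree integer and C a positive divisor of D. For i = 1, 2, let r_i, s_i, t_i be positive integers with r_i ∣ D/C, s_i ∣ C, t_i ∣ C and gcd(s_i, t_i) = 1, and let x_i be integers with gcd(x_i, D) = 1. Set q_i = (r_i·s_i²·t_i·x_i)/(D·C) ∈ ℚ. If there exist integers α, β, δ, ω with α·ω − β·(D·C)·δ = 1 and α·q₁ + β = q₂·((D·C)·δ·q₁ + ω), then r₁ = r₂, s₁ = s₂, t₁ = t₂, and t₁ divides x₁ − x₂. -/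
/-- the representatives `(r·s²·t·x)/(D·C)` of the cusps of `X₀(DC)` are
pairwise `Γ₀(DC)`-inequivalent: if two of them are related by a matrix of `Γ₀(DC)` under
the Möbius action, then `r₁ = r₂`, `s₁ = s₂`, `t₁ = t₂` and `t₁ ∣ x₁ − x₂`. -/
theorem stmt_4 (D C : ℕ) (hD : 0 < D) (hsq : Squarefree D) (hC : C ∣ D) (hC0 : 0 < C)
    (r₁ s₁ t₁ r₂ s₂ t₂ : ℕ) (x₁ x₂ : ℤ)
    (hr₁0 : 0 < r₁) (hs₁0 : 0 < s₁) (ht₁0 : 0 < t₁)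
    (hr₂0 : 0 < r₂) (hs₂0 : 0 < s₂) (ht₂0 : 0 < t₂)
    (hr₁ : r₁ ∣ D / C) (hs₁ : s₁ ∣ C) (ht₁ : t₁ ∣ C) (hst₁ : Nat.gcd s₁ t₁ = 1)
    (hr₂ : r₂ ∣ D / C) (hs₂ : s₂ ∣ C) (ht₂ : t₂ ∣ C) (hst₂ : Nat.gcd s₂ t₂ = 1)
    (hx₁ : Int.gcd x₁ (D : ℤ) = 1) (hx₂ : Int.gcd x₂ (D : ℤ) = 1)
    (q₁ q₂ : ℚ)
    (hq₁ : q₁ = (r₁ * s₁ ^ 2 * t₁ : ℚ) * (x₁ : ℚ) / (D * C : ℚ))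
    (hq₂ : q₂ = (r₂ * s₂ ^ 2 * t₂ : ℚ) * (x₂ : ℚ) / (D * C : ℚ))
    (α β δ ω : ℤ)
    (hdet : α * ω - β * ((D : ℤ) * C) * δ = 1)
    (heq : (α : ℚ) * q₁ + (β : ℚ) = q₂ * ((D * C : ℚ) * (δ : ℚ) * q₁ + (ω : ℚ))) :
    r₁ = r₂ ∧ s₁ = s₂ ∧ t₁ = t₂ ∧ (t₁ : ℤ) ∣ x₁ - x₂ := by
  -- Set up `D = C * M` with `C, M` coprime and squarefree.
  obtain ⟨M, hDM⟩ := hC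
  have hr₁' : r₁ ∣ M := by rwa [hDM, Nat.mul_div_cancel_left _ hC0] at hr₁
  have hr₂' : r₂ ∣ M := by rwa [hDM, Nat.mul_div_cancel_left _ hC0] at hr₂
  have hsqCM : Squarefree (C * M) := hDM ▸ hsq
  obtain ⟨hCM, hsqC, hsqM⟩ := Nat.squarefree_mul_iff.mp hsqCM
  have hM0 : 0 < M := by
    rcases Nat.eq_zero_or_pos M with h | h
    · subst h; simp at hDM; omega
    · exact h
  -- the numerators
  set g₁ : ℕ := r₁ * s₁ ^ 2 * t₁ with hg₁def
  set g₂ : ℕ := r₂ * s₂ ^ 2 * t₂ with hg₂def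
  have hg₁0 : 0 < g₁ := by positivity
  have hg₂0 : 0 < g₂ := by positivity
  have hstC₁ : s₁ * t₁ ∣ C := Nat.Coprime.mul_dvd_of_dvd_of_dvd hst₁ hs₁ ht₁
  have hstC₂ : s₂ * t₂ ∣ C := Nat.Coprime.mul_dvd_of_dvd_of_dvd hst₂ hs₂ ht₂
  have hst2₁ : s₁ ^ 2 * t₁ ∣ C * C :=
    dvd_trans ⟨t₁, by ring⟩ (mul_dvd_mul hstC₁ hstC₁)
  have hst2₂ : s₂ ^ 2 * t₂ ∣ C * C :=
    dvd_trans ⟨t₂, by ring⟩ (mul_dvd_mul hstC₂ hstC₂)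
  have hgN₁ : g₁ ∣ D * C := by
    calc g₁ = r₁ * (s₁ ^ 2 * t₁) := by ring
    _ ∣ M * (C * C) := mul_dvd_mul hr₁' hst2₁
    _ = D * C := by rw [hDM]; ring
  have hgN₂ : g₂ ∣ D * C := by
    calc g₂ = r₂ * (s₂ ^ 2 * t₂) := by ring
    _ ∣ M * (C * C) := mul_dvd_mul hr₂' hst2₂
    _ = D * C := by rw [hDM]; ring
  obtain ⟨c₁, hc₁⟩ := hgN₁
  obtain ⟨c₂, hc₂⟩ := hgN₂
  have hDC0 : 0 < D * C := Nat.mul_pos hD hC0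
  have hc₁0 : 0 < c₁ := by rcases Nat.eq_zero_or_pos c₁ with h | h; · simp [h] at hc₁; omega
                           · exact h
  have hc₂0 : 0 < c₂ := by rcases Nat.eq_zero_or_pos c₂ with h | h; · simp [h] at hc₂; omega
                           · exact h
  have hc₁Q : (c₁ : ℚ) ≠ 0 := by positivity
  have hc₂Q : (c₂ : ℚ) ≠ 0 := by positivity
  have hDCQ : ((D : ℚ) * C) ≠ 0 := by positivity
  have hgc₁Q : ((D : ℚ) * C) = (g₁ : ℚ) * c₁ := by exact_mod_cast congrArg (Nat.cast (R := ℚ)) hc₁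
  have hgc₂Q : ((D : ℚ) * C) = (g₂ : ℚ) * c₂ := by exact_mod_cast congrArg (Nat.cast (R := ℚ)) hc₂
  -- rewrite q₁, q₂ in lowest terms
  have hq₁' : q₁ = (x₁ : ℚ) / (c₁ : ℚ) := by
    rw [hq₁, div_eq_div_iff hDCQ hc₁Q]
    push_cast [hg₁def] at hgc₁Q ⊢
    linear_combination (-(x₁ : ℚ)) * hgc₁Q
  have hq₂' : q₂ = (x₂ : ℚ) / (c₂ : ℚ) := by
    rw [hq₂, div_eq_div_iff hDCQ hc₂Q]
    push_cast [hg₂def] at hgc₂Q ⊢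
    linear_combination (-(x₂ : ℚ)) * hgc₂Q
  -- clear denominators in heq
  have key : (c₂ : ℤ) * (α * x₁ + β * c₁) = x₂ * ((D : ℤ) * C * δ * x₁ + ω * c₁) := by
    have hQ : (c₁ : ℚ) * ((c₂ : ℚ) * (α * x₁ + β * c₁))
        = (c₁ : ℚ) * ((x₂ : ℚ) * ((D : ℚ) * C * δ * x₁ + ω * c₁)) := by
      rw [hq₁', hq₂'] at heq
      field_simp at heq
      linear_combination (c₁ : ℚ) * heq
    have hZ : (c₁ : ℤ) * ((c₂ : ℤ) * (α * x₁ + β * c₁))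
        = (c₁ : ℤ) * (x₂ * ((D : ℤ) * C * δ * x₁ + ω * c₁)) := by exact_mod_cast hQ
    exact mul_left_cancel₀ (by positivity) hZ
  set A : ℤ := α * x₁ + β * c₁ with hAdef
  set B : ℤ := (D : ℤ) * C * δ * x₁ + ω * c₁ with hBdef
  -- coprimality facts
  have hx₁D : IsCoprime x₁ (D : ℤ) := Int.isCoprime_iff_gcd_eq_one.mpr hx₁
  have hx₂D : IsCoprime x₂ (D : ℤ) := Int.isCoprime_iff_gcd_eq_one.mpr hx₂
  have hCdvdD : (C : ℤ) ∣ (D : ℤ) := Int.natCast_dvd_natCast.mpr ⟨M, hDM⟩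
  have hx₁N : IsCoprime x₁ ((D : ℤ) * C) :=
    IsCoprime.mul_right hx₁D (hx₁D.of_isCoprime_of_dvd_right hCdvdD)
  have hx₂N : IsCoprime x₂ ((D : ℤ) * C) :=
    IsCoprime.mul_right hx₂D (hx₂D.of_isCoprime_of_dvd_right hCdvdD)
  have hc₁N : (c₁ : ℤ) ∣ (D : ℤ) * C := by
    refine ⟨(g₁ : ℤ), ?_⟩; exact_mod_cast hc₁.trans (Nat.mul_comm _ _)
  have hc₂N : (c₂ : ℤ) ∣ (D : ℤ) * C := by
    refine ⟨(g₂ : ℤ), ?_⟩; exact_mod_cast hc₂.trans (Nat.mul_comm _ _)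
  have hx₁c₁ : IsCoprime x₁ (c₁ : ℤ) := hx₁N.of_isCoprime_of_dvd_right hc₁N
  have hx₂c₂ : IsCoprime x₂ (c₂ : ℤ) := hx₂N.of_isCoprime_of_dvd_right hc₂N
  have hAB : IsCoprime A B := by
    obtain ⟨u, v, huv⟩ := hx₁c₁
    refine ⟨u * ω - v * ((D : ℤ) * C * δ), v * α - u * β, ?_⟩
    rw [hAdef, hBdef]
    linear_combination (u * x₁ + v * (c₁ : ℤ)) * hdet + huv
  have hBc₂ : B ∣ (c₂ : ℤ) :=
    hAB.symm.dvd_of_dvd_mul_right ⟨x₂, by linarith [key]⟩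
  have hc₂B : (c₂ : ℤ) ∣ B := by
    have h1 : (c₂ : ℤ) ∣ x₂ * B := ⟨A, by linarith [key]⟩
    exact (hx₂c₂.symm).dvd_of_dvd_mul_left h1
  -- B = ± c₂
  obtain ⟨ε, hε1, hB⟩ : ∃ ε : ℤ, ε * ε = 1 ∧ B = ε * (c₂ : ℤ) := by
    have hnb : B.natAbs = c₂ := by
      have h1 := Int.natAbs_dvd_natAbs.mpr hBc₂
      have h2 := Int.natAbs_dvd_natAbs.mpr hc₂B
      simpa using Nat.dvd_antisymm h1 h2
    rcases Int.natAbs_eq B with h | h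
    · exact ⟨1, by ring, by rw [h, hnb]; ring⟩
    · exact ⟨-1, by ring, by rw [h, hnb]; ring⟩
  have hc₂Z : (c₂ : ℤ) ≠ 0 := by positivity
  have hc₁Z : (c₁ : ℤ) ≠ 0 := by positivity
  have hA : A = ε * x₂ := by
    apply mul_left_cancel₀ hc₂Z
    rw [key, hB]; ring
  -- c₁ = c₂
  have hc₁c₂ : c₁ = c₂ := by
    have h1 : (c₁ : ℤ) ∣ (c₂ : ℤ) := by
      have hc₁B : (c₁ : ℤ) ∣ B := by
        rw [hBdef]
        exact dvd_add ((hc₁N.mul_left (δ * x₁)).trans ⟨1, by ring⟩) (Dvd.intro_left ω rfl)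
      have : (c₂ : ℤ) = ε * B := by rw [hB]; linear_combination (-(c₂ : ℤ)) * hε1
      rw [this]; exact hc₁B.mul_left ε
    have h2 : (c₂ : ℤ) ∣ (c₁ : ℤ) := by
      have hωN : IsCoprime ω ((D : ℤ) * C) := ⟨α, -(β * δ), by linear_combination hdet⟩
      have hωc₂ : IsCoprime ω (c₂ : ℤ) := hωN.of_isCoprime_of_dvd_right hc₂N
      have h3 : (c₂ : ℤ) ∣ ω * c₁ := by
        have : ω * (c₁ : ℤ) = ε * c₂ - (D : ℤ) * C * δ * x₁ := by
          rw [← hB, hBdef]; ring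
        rw [this]
        exact dvd_sub (Dvd.intro ε (mul_comm _ _)) ((hc₂N.mul_right x₁).mul_left δ |>.trans ⟨1, by ring⟩)
      exact (hωc₂.symm).dvd_of_dvd_mul_left h3
    exact_mod_cast Int.dvd_antisymm (by positivity) (by positivity) h1 h2
  have hg₁g₂ : g₁ = g₂ := by
    have : g₁ * c₁ = g₂ * c₁ := by rw [← hc₁, hc₁c₂, ← hc₂]
    exact Nat.eq_of_mul_eq_mul_right hc₁0 this
  -- recover r from g via gcd with M
  have hrgcd : ∀ r s t : ℕ, r ∣ M → s ∣ C → t ∣ C → Nat.gcd (r * s ^ 2 * t) M = r := by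
    intro r s t hr hs ht
    have hsM : Nat.Coprime s M := Nat.Coprime.coprime_dvd_left hs hCM
    have htM : Nat.Coprime t M := Nat.Coprime.coprime_dvd_left ht hCM
    have hstM : Nat.Coprime (s ^ 2 * t) M := Nat.Coprime.mul (hsM.pow_left 2) htM
    calc Nat.gcd (r * s ^ 2 * t) M = Nat.gcd (r * (s ^ 2 * t)) M := by rw [mul_assoc]
      _ = Nat.gcd r M := Nat.Coprime.gcd_mul_right_cancel r hstM
      _ = r := Nat.gcd_eq_left hr
  have hrr : r₁ = r₂ := by
    have e1 := hrgcd r₁ s₁ t₁ hr₁' hs₁ ht₁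
    have e2 := hrgcd r₂ s₂ t₂ hr₂' hs₂ ht₂
    rw [← e1, ← e2, ← hg₁def, ← hg₂def, hg₁g₂]
  -- recover s*t from s^2*t via gcd with C
  have hstst : s₁ ^ 2 * t₁ = s₂ ^ 2 * t₂ := by
    apply Nat.eq_of_mul_eq_mul_left hr₁0
    have : r₁ * (s₁ ^ 2 * t₁) = g₁ := by rw [hg₁def]; ring
    rw [this, hg₁g₂, hg₂def, hrr]; ring
  have hstgcd : ∀ s t : ℕ, s ∣ C → t ∣ C → Nat.gcd s t = 1 →
      Nat.gcd (s ^ 2 * t) C = s * t := by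
    intro s t hs ht hst
    apply Nat.dvd_antisymm
    · have h1 : Nat.gcd (s ^ 2 * t) C ∣ (s * t) ^ 2 :=
        (Nat.gcd_dvd_left _ _).trans ⟨t, by ring⟩
      have h2 : Squarefree (Nat.gcd (s ^ 2 * t) C) :=
        Squarefree.squarefree_of_dvd (Nat.gcd_dvd_right _ _) hsqC
      exact (h2.dvd_pow_iff_dvd two_ne_zero).mp h1
    · exact Nat.dvd_gcd ⟨s, by ring⟩ (Nat.Coprime.mul_dvd_of_dvd_of_dvd hst hs ht)
  have hstst' : s₁ * t₁ = s₂ * t₂ := by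
    have e1 := hstgcd s₁ t₁ hs₁ ht₁ hst₁
    have e2 := hstgcd s₂ t₂ hs₂ ht₂ hst₂
    rw [← e1, ← e2, hstst]
  have hss : s₁ = s₂ := by
    have h1 : s₁ * (s₁ * t₁) = s₂ * (s₁ * t₁) := by
      calc s₁ * (s₁ * t₁) = s₁ ^ 2 * t₁ := by ring
      _ = s₂ ^ 2 * t₂ := hstst
      _ = s₂ * (s₂ * t₂) := by ring
      _ = s₂ * (s₁ * t₁) := by rw [hstst']
    exact Nat.eq_of_mul_eq_mul_right (Nat.mul_pos hs₁0 ht₁0) h1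
  have htt : t₁ = t₂ := by
    have : s₁ * t₁ = s₁ * t₂ := by rw [hstst', hss]
    exact Nat.eq_of_mul_eq_mul_left hs₁0 this
  refine ⟨hrr, hss, htt, ?_⟩
  -- finally, t₁ ∣ x₁ - x₂
  have ht₁c₁ : t₁ ∣ c₁ := by
    have h1 : g₁ * t₁ ∣ g₁ * c₁ := by
      rw [← hc₁]
      calc g₁ * t₁ = r₁ * ((s₁ * t₁) * (s₁ * t₁)) := by rw [hg₁def]; ring
      _ ∣ M * (C * C) := mul_dvd_mul hr₁' (mul_dvd_mul hstC₁ hstC₁)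
      _ = D * C := by rw [hDM]; ring
    exact (Nat.mul_dvd_mul_iff_left hg₁0).mp h1
  have htc : (t₁ : ℤ) ∣ (c₁ : ℤ) := Int.natCast_dvd_natCast.mpr ht₁c₁
  have htg : (t₁ : ℤ) ∣ (g₁ : ℤ) := Int.natCast_dvd_natCast.mpr ⟨r₁ * s₁ ^ 2, by rw [hg₁def]; ring⟩
  have htN : (t₁ : ℤ) ∣ (D : ℤ) * C :=
    ((Int.natCast_dvd_natCast.mpr ht₁).trans hCdvdD).mul_right C
  have hDCg : (D : ℤ) * C = (g₁ : ℤ) * c₁ := by exact_mod_cast hc₁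
  -- ε - ω = g₁ δ x₁
  have hω : ε - ω = (g₁ : ℤ) * δ * x₁ := by
    apply mul_right_cancel₀ hc₁Z
    have hB' : (D : ℤ) * C * δ * x₁ + ω * c₁ = ε * c₁ := by
      rw [← hBdef, hB, hc₁c₂]
    linear_combination δ * x₁ * hDCg - hB'
  have hαε : (t₁ : ℤ) ∣ α * ε - 1 := by
    have hid : α * ε - 1 = α * ((g₁ : ℤ) * δ * x₁) + β * ((D : ℤ) * C) * δ := by
      linear_combination α * hω + hdet
    rw [hid]
    exact dvd_add (((htg.mul_right δ).mul_right x₁).mul_left α) ((htN.mul_left β).mul_right δ)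
  have hfin : x₁ - x₂ = -x₁ * (α * ε - 1) - ε * β * (c₁ : ℤ) := by
    have hA' : α * x₁ + β * (c₁ : ℤ) = ε * x₂ := by rw [← hAdef, hA]
    linear_combination ε * hA' + x₂ * hε1
  rw [hfin]
  exact dvd_sub (hαε.mul_left (-x₁)) (htc.mul_left (ε * β))
end

section
/- Let D be a positive squarefree integer and C a positive divisor of D. Let r, s, t be positive integers with r ∣ D/C, s ∣ C, t ∣ C and gcd(s, t) = 1, and let x be an integer with gcd(x, D) = 1. Let p be a prime with p ∣ D/C and p ∤ r. Then the rational numbers (r·s²·t·x)/(D·C) and (r·s²·t·p·x)/((D·C)/p) are Γ₀((D·C)/p)-equivalent; that is, there exist integers α, β, δ, ω with α·ω − β·((D·C)/p)·δ = 1 such that α·q₁ + β = q₂·(((D·C)/p)·δ·q₁ + ω), where q₁ = (r·s²·t·x)/(D·C) and q₂ = (r·s²·t·p·x)/((D·C)/p). -/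
/-- for a prime `p ∣ D/C` with `p ∤ r`, the cusps `(r·s²·t·x)/(D·C)` and
`(r·s²·t·p·x)/((D·C)/p)` are `Γ₀((D·C)/p)`-equivalent. -/
theorem stmt_5 (D C : ℕ) (hD : 0 < D) (hsq : Squarefree D) (hC : C ∣ D) (hC0 : 0 < C)
    (r s t : ℕ) (hr0 : 0 < r) (hs0 : 0 < s) (ht0 : 0 < t)
    (hr : r ∣ D / C) (hs : s ∣ C) (ht : t ∣ C) (hst : Nat.gcd s t = 1)
    (x : ℤ) (hx : Int.gcd x (D : ℤ) = 1)
    (p : ℕ) (hp : p.Prime) (hpD : p ∣ D / C) (hpr : ¬ p ∣ r)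
    (q₁ q₂ : ℚ)
    (hq₁ : q₁ = (r * s ^ 2 * t : ℚ) * (x : ℚ) / (D * C : ℚ))
    (hq₂ : q₂ = (r * s ^ 2 * t * p : ℚ) * (x : ℚ) / ((D * C / p : ℕ) : ℚ)) :
    ∃ α β δ ω : ℤ,
      α * ω - β * ((D * C / p : ℕ) : ℤ) * δ = 1 ∧
      (α : ℚ) * q₁ + (β : ℚ) = q₂ * (((D * C / p : ℕ) : ℚ) * (δ : ℚ) * q₁ + (ω : ℚ)) := by
  have hpD2 : p ∣ D := hpD.trans (Nat.div_dvd_of_dvd hC)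
  have hpC : ¬ p ∣ C := by
    intro h
    have hpp : p * p ∣ D := by
      have h2 := Nat.mul_dvd_mul hpD h
      rwa [Nat.div_mul_cancel hC] at h2
    exact hp.one_lt.ne' (Nat.isUnit_iff.mp (hsq p hpp))
  set N : ℕ := D * C / p with hN
  have hpDC : p ∣ D * C := hpD2.mul_right C
  have hNp : N * p = D * C := Nat.div_mul_cancel hpDC
  have hN0 : N ≠ 0 := by
    intro h
    have : D * C = 0 := by rw [← hNp, h, zero_mul]
    rcases Nat.mul_eq_zero.mp this with h1 | h1
    · exact hD.ne' h1
    · exact hC0.ne' h1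
  have hpN : ¬ p ∣ N := by
    intro h
    have hm : ¬ p ∣ D / p := by
      intro h2
      have hpp : p * p ∣ D := by
        have h3 := Nat.mul_dvd_mul_left p h2
        rw [Nat.mul_div_cancel' hpD2] at h3
        exact h3
      exact hp.one_lt.ne' (Nat.isUnit_iff.mp (hsq p hpp))
    have hDC : p * p ∣ D * C := by
      have := Nat.mul_dvd_mul h (dvd_refl p)
      rwa [hNp] at this
    have : p * p ∣ p * ((D / p) * C) := by
      rwa [← mul_assoc, Nat.mul_div_cancel' hpD2]
    have h4 : p ∣ (D / p) * C := (Nat.mul_dvd_mul_iff_left hp.pos).mp this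
    rcases (Nat.Prime.dvd_mul hp).mp h4 with h5 | h5
    · exact hm h5
    · exact hpC h5
  have hpP : Prime (p : ℤ) := Nat.prime_iff_prime_int.mp hp
  set a : ℤ := (r : ℤ) * (s : ℤ) ^ 2 * (t : ℤ) * x with ha
  have hpa : ¬ (p : ℤ) ∣ a := by
    intro h
    rcases hpP.dvd_mul.mp h with h1 | h1
    · rcases hpP.dvd_mul.mp h1 with h2 | h2
      · rcases hpP.dvd_mul.mp h2 with h3 | h3
        · exact hpr (Int.ofNat_dvd.mp h3)
        · have : p ∣ s := Int.ofNat_dvd.mp (hpP.dvd_of_dvd_pow h3)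
          exact hpC (this.trans hs)
      · exact hpC ((Int.ofNat_dvd.mp h2).trans ht)
    · -- p ∣ x contradicts gcd x D = 1
      have hxD : IsCoprime x (D : ℤ) := Int.isCoprime_iff_gcd_eq_one.mpr hx
      have hpDz : (p : ℤ) ∣ (D : ℤ) := Int.ofNat_dvd.mpr hpD2
      have := hxD.isUnit_of_dvd' h1 hpDz
      exact hpP.not_unit this
  have hpNz : ¬ (p : ℤ) ∣ (N : ℤ) := fun h => hpN (Int.ofNat_dvd.mp h)
  have hcop : IsCoprime ((p : ℤ)) (a * (N : ℤ)) := by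
    refine IsCoprime.mul_right ?_ ?_
    · exact (hpP.coprime_iff_not_dvd).mpr hpa
    · exact (hpP.coprime_iff_not_dvd).mpr hpNz
  obtain ⟨u, v, huv⟩ := hcop
  refine ⟨(p : ℤ) * (2 - (p : ℤ) * u), -(a ^ 2 * v), v * (N : ℤ), u, ?_, ?_⟩
  · linear_combination (1 - (p : ℤ) * u + a * v * (N : ℤ)) * huv
  · have hNQ : (N : ℚ) * (p : ℚ) = (D : ℚ) * (C : ℚ) := by exact_mod_cast hNp
    have hNQ0 : (N : ℚ) ≠ 0 := Nat.cast_ne_zero.mpr hN0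
    have hpQ0 : (p : ℚ) ≠ 0 := Nat.cast_ne_zero.mpr hp.pos.ne'
    have hDC0 : (D : ℚ) * (C : ℚ) ≠ 0 := by rw [← hNQ]; exact mul_ne_zero hNQ0 hpQ0
    have huvQ : (u : ℚ) * (p : ℚ) + (v : ℚ) * (((r : ℚ) * (s : ℚ) ^ 2 * (t : ℚ) * (x : ℚ)) * (N : ℚ)) = 1 := by
      exact_mod_cast huv
    subst hq₁ hq₂
    rw [← hN] at *
    push_cast
    rw [← hNQ]
    field_simp
    simp only [ha]
    push_cast
    linear_combination (-2 * ((r : ℚ) * (s : ℚ) ^ 2 * (t : ℚ) * (x : ℚ))) * huvQ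
end

section
/- Let D be a positive squarefree integer and C a positive divisor of D. Let r, s, t be positive integers with r ∣ D/C, s ∣ C, t ∣ C and gcd(s, t) = 1, and let x be an integer with gcd(x, D) = 1. Let p be a prime with p ∣ C and p ∤ s·t. Then the rational numbers (r·s²·t·x)/(D·C) and (r·s²·t·p²·x)/((D·C)/p²) are Γ₀((D·C)/p²)-equivalent; that is, there exist integers α, β, δ, ω with α·ω − β·((D·C)/p²)·δ = 1 such that α·q₁ + β = q₂·(((D·C)/p²)·δ·q₁ + ω), where q₁ = (r·s²·t·x)/(D·C) and q₂ = (r·s²·t·p²·x)/((D·C)/p²). -/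
/-- for a prime `p ∣ C` with `p ∤ s·t`, the cusps `(r·s²·t·x)/(D·C)` and
`(r·s²·t·p²·x)/((D·C)/p²)` are `Γ₀((D·C)/p²)`-equivalent. -/
theorem stmt_6 (D C : ℕ) (hD : 0 < D) (hsq : Squarefree D) (hC : C ∣ D) (hC0 : 0 < C)
    (r s t : ℕ) (hr0 : 0 < r) (hs0 : 0 < s) (ht0 : 0 < t)
    (hr : r ∣ D / C) (hs : s ∣ C) (ht : t ∣ C) (hst : Nat.gcd s t = 1)
    (x : ℤ) (hx : Int.gcd x (D : ℤ) = 1)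
    (p : ℕ) (hp : p.Prime) (hpC : p ∣ C) (hpst : ¬ p ∣ s * t)
    (q₁ q₂ : ℚ)
    (hq₁ : q₁ = (r * s ^ 2 * t : ℚ) * (x : ℚ) / (D * C : ℚ))
    (hq₂ : q₂ = (r * s ^ 2 * t * p ^ 2 : ℚ) * (x : ℚ) / ((D * C / p ^ 2 : ℕ) : ℚ)) :
    ∃ α β δ ω : ℤ,
      α * ω - β * ((D * C / p ^ 2 : ℕ) : ℤ) * δ = 1 ∧
      (α : ℚ) * q₁ + (β : ℚ) = q₂ * (((D * C / p ^ 2 : ℕ) : ℚ) * (δ : ℚ) * q₁ + (ω : ℚ)) := by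
  have hpD : p ∣ D := hpC.trans hC
  have hp2 : p ^ 2 ∣ D * C := by
    rw [pow_two]; exact mul_dvd_mul hpD hpC
  set m : ℕ := D * C / p ^ 2 with hm
  have hmp : m * p ^ 2 = D * C := Nat.div_mul_cancel hp2
  have hDC0 : 0 < D * C := Nat.mul_pos hD hC0
  have hm0 : 0 < m := by
    rcases Nat.eq_zero_or_pos m with h | h
    · rw [h, zero_mul] at hmp; omega
    · exact h
  have hsqC : Squarefree C := hsq.squarefree_of_dvd hC
  have hp2D : ¬ p ^ 2 ∣ D := by
    intro h; exact hp.not_isUnit (hsq p (by rwa [← pow_two]))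
  have hp2C : ¬ p ^ 2 ∣ C := by
    intro h; exact hp.not_isUnit (hsqC p (by rwa [← pow_two]))
  have hpm : ¬ p ∣ m := by
    intro h
    have h3 : p ^ 3 ∣ D * C := by
      rw [← hmp]
      calc p ^ 3 = p * p ^ 2 := by ring
      _ ∣ m * p ^ 2 := mul_dvd_mul_right h _
    have hDf : D.factorization p ≤ 1 := (Nat.squarefree_iff_factorization_le_one hD.ne').mp hsq p
    have hCf : C.factorization p ≤ 1 := (Nat.squarefree_iff_factorization_le_one hC0.ne').mp hsqC p
    have := (Nat.Prime.pow_dvd_iff_le_factorization hp hDC0.ne').mp h3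
    rw [Nat.factorization_mul hD.ne' hC0.ne'] at this
    simp at this
    omega
  have hpr : ¬ p ∣ r := by
    intro h
    apply hp2D
    have : p * p ∣ (D / C) * C := mul_dvd_mul (h.trans hr) hpC
    rwa [Nat.div_mul_cancel hC, ← pow_two] at this
  have hps : ¬ p ∣ s := fun h => hpst (h.trans (dvd_mul_right s t))
  have hpt : ¬ p ∣ t := fun h => hpst (h.trans (dvd_mul_left t s))
  have hpx : ¬ (p : ℤ) ∣ x := by
    intro h
    have : (p : ℤ) ∣ Int.gcd x (D : ℤ) := Int.dvd_coe_gcd h (Int.natCast_dvd_natCast.mpr hpD)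
    rw [hx] at this
    exact hp.one_lt.ne' (by exact_mod_cast Int.eq_one_of_dvd_one (by positivity) this)
  set a : ℤ := (r : ℤ) * (s : ℤ) ^ 2 * (t : ℤ) * x with ha
  have hppZ : Prime (p : ℤ) := Nat.prime_iff_prime_int.mp hp
  have hpa : IsCoprime ((p : ℤ)) a := by
    rw [Prime.coprime_iff_not_dvd hppZ]
    intro h
    rcases hppZ.dvd_mul.mp h with h1 | h1
    · rcases hppZ.dvd_mul.mp h1 with h2 | h2
      · rcases hppZ.dvd_mul.mp h2 with h3 | h3
        · exact hpr (by exact_mod_cast h3)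
        · exact hps (by exact_mod_cast hppZ.dvd_of_dvd_pow h3)
      · exact hpt (by exact_mod_cast h2)
    · exact hpx h1
  have hpmZ : IsCoprime ((p : ℤ)) (m : ℤ) := by
    rw [Prime.coprime_iff_not_dvd hppZ]
    intro h
    exact hpm (by exact_mod_cast h)
  have hcop : IsCoprime ((p : ℤ) ^ 2) (a * (m : ℤ)) := (hpa.mul_right hpmZ).pow_left
  obtain ⟨w, k, hbez⟩ := hcop
  refine ⟨(p : ℤ) ^ 2 * (1 + k * a * m), -k * a ^ 2, k * m, w, ?_, ?_⟩
  · push_cast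
    linear_combination (1 + k * a * (m : ℤ)) * hbez
  · subst hq₁ hq₂
    have hbezQ : (w : ℚ) * (p : ℚ) ^ 2 + (k : ℚ) * (((r : ℚ) * (s : ℚ) ^ 2 * (t : ℚ) * (x : ℚ)) * (m : ℚ)) = 1 := by
      have h := hbez
      rw [ha] at h
      exact_mod_cast h
    have hmpQ : (m : ℚ) * (p : ℚ) ^ 2 = (D : ℚ) * (C : ℚ) := by exact_mod_cast hmp
    have hm0Q : (m : ℚ) ≠ 0 := by exact_mod_cast hm0.ne'
    have hD0Q : (D : ℚ) ≠ 0 := by exact_mod_cast hD.ne'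
    have hC0Q : (C : ℚ) ≠ 0 := by exact_mod_cast hC0.ne'
    have hp0Q : (p : ℚ) ≠ 0 := by exact_mod_cast hp.pos.ne'
    have haQ : ((a : ℤ) : ℚ) = (r : ℚ) * (s : ℚ) ^ 2 * (t : ℚ) * (x : ℚ) := by push_cast [ha]; ring
    rw [← hmpQ]
    push_cast
    field_simp
    linear_combination (-((r:ℚ) * s^2 * t * x)) * hbezQ + (-(k:ℚ) * ((a:ℤ):ℚ) * (m:ℚ)) * haQ
end

section
/- Let D be a positive squarefree integer and C a positive divisor of D. Let r, s, t be positive integers with r ∣ D/C, s ∣ C, t ∣ C and gcd(s, t) = 1, and let x be an integer with gcd(x, D) = 1. Let K be a positive divisor of D with gcd(K, r·s·t) = 1, and let α be a positive divisor of K. Then the rational numbers (r·s²·t·α·x)/(D·C) and (r·s²·t·((K·gcd(K, C))/α)·x)/((D·C)/(K·gcd(K, C))) are Γ₀((D·C)/(K·gcd(K, C)))-equivalent. -/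
/-- If `D` is squarefree, `C ∣ D`, `K ∣ D`, then `K * gcd K C` is a unitary divisor of
`D * C`: it is coprime to the complementary factor `D * C / (K * gcd K C)`. -/
theorem aux_coprime_stmt7 (D C K : ℕ) (hD : 0 < D) (hsq : Squarefree D) (hC : C ∣ D)
    (hC0 : 0 < C) (hK : K ∣ D) :
    Nat.Coprime (K * Nat.gcd K C) (D * C / (K * Nat.gcd K C)) := by
  set g := Nat.gcd K C with hg
  set n := D * C / (K * g) with hn
  have hgK : g ∣ K := Nat.gcd_dvd_left K C
  have hgC : g ∣ C := Nat.gcd_dvd_right K C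
  have hKg : K * g ∣ D * C := mul_dvd_mul hK hgC
  have En : n * (K * g) = D * C := Nat.div_mul_cancel hKg
  by_contra h
  set p := Nat.minFac (Nat.gcd (K * g) n) with hp
  have hpp : p.Prime := Nat.minFac_prime h
  have hpKg : p ∣ K * g := (Nat.minFac_dvd _).trans (Nat.gcd_dvd_left _ _)
  have hpn : p ∣ n := (Nat.minFac_dvd _).trans (Nat.gcd_dvd_right _ _)
  have hpK : p ∣ K := by
    rcases hpp.dvd_mul.mp hpKg with h1 | h1
    · exact h1
    · exact h1.trans hgK
  have hDC0 : D * C ≠ 0 := by positivity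
  have hCsq : Squarefree C := Squarefree.squarefree_of_dvd hC hsq
  have hfD : D.factorization p ≤ 1 := hsq.natFactorization_le_one p
  have hfC : C.factorization p ≤ 1 := hCsq.natFactorization_le_one p
  have hfDC : (D * C).factorization p = D.factorization p + C.factorization p := by
    rw [Nat.factorization_mul hD.ne' hC0.ne']; rfl
  have h2 : p ^ 2 ∣ D * C := by
    have h21 : p * p ∣ n * K := mul_dvd_mul hpn hpK
    have h22 : n * K ∣ n * (K * g) := by
      rw [← mul_assoc]; exact dvd_mul_right _ _
    calc p ^ 2 = p * p := sq p
      _ ∣ n * K := h21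
      _ ∣ n * (K * g) := h22
      _ = D * C := En
  have h2' : 2 ≤ D.factorization p + C.factorization p := by
    have := (hpp.pow_dvd_iff_le_factorization hDC0).mp h2
    rwa [hfDC] at this
  have hpC : p ∣ C := Nat.dvd_of_factorization_pos (by omega)
  have hpg : p ∣ g := Nat.dvd_gcd hpK hpC
  have h3 : p ^ 3 ∣ D * C := by
    have h31 : p * (p * p) ∣ n * (K * g) := mul_dvd_mul hpn (mul_dvd_mul hpK hpg)
    calc p ^ 3 = p * (p * p) := by ring
      _ ∣ n * (K * g) := h31
      _ = D * C := En
  have h3' : 3 ≤ D.factorization p + C.factorization p := by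
    have := (hpp.pow_dvd_iff_le_factorization hDC0).mp h3
    rwa [hfDC] at this
  omega

/-- for `K` a positive divisor of `D` with `gcd(K, r·s·t) = 1` and `α` a
positive divisor of `K`, the cusps `(r·s²·t·α·x)/(D·C)` and
`(r·s²·t·((K·gcd(K,C))/α)·x)/((D·C)/(K·gcd(K,C)))` are
`Γ₀((D·C)/(K·gcd(K,C)))`-equivalent. -/
theorem stmt_7 (D C : ℕ) (hD : 0 < D) (hsq : Squarefree D) (hC : C ∣ D) (hC0 : 0 < C)
    (r s t : ℕ) (hr0 : 0 < r) (hs0 : 0 < s) (ht0 : 0 < t)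
    (hr : r ∣ D / C) (hs : s ∣ C) (ht : t ∣ C) (hst : Nat.gcd s t = 1)
    (x : ℤ) (hx : Int.gcd x (D : ℤ) = 1)
    (K : ℕ) (hK0 : 0 < K) (hK : K ∣ D) (hKrst : Nat.gcd K (r * s * t) = 1)
    (α : ℕ) (hα0 : 0 < α) (hα : α ∣ K)
    (q₁ q₂ : ℚ)
    (hq₁ : q₁ = (r * s ^ 2 * t * α : ℚ) * (x : ℚ) / (D * C : ℚ))
    (hq₂ : q₂ = (r * s ^ 2 * t * (K * Nat.gcd K C / α : ℕ) : ℚ) * (x : ℚ) /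
        ((D * C / (K * Nat.gcd K C) : ℕ) : ℚ)) :
    ∃ a b c d : ℤ,
      a * d - b * ((D * C / (K * Nat.gcd K C) : ℕ) : ℤ) * c = 1 ∧
      (a : ℚ) * q₁ + (b : ℚ) =
        q₂ * (((D * C / (K * Nat.gcd K C) : ℕ) : ℚ) * (c : ℚ) * q₁ + (d : ℚ)) := by
  set g := Nat.gcd K C with hg
  have hgK : g ∣ K := Nat.gcd_dvd_left K C
  have hgC : g ∣ C := Nat.gcd_dvd_right K C
  have hαKg : α ∣ K * g := hα.trans (dvd_mul_right K g)
  have hKgDC : K * g ∣ D * C := mul_dvd_mul hK hgC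
  set β := K * g / α with hβ
  set n := D * C / (K * g) with hn
  have Eβ : β * α = K * g := Nat.div_mul_cancel hαKg
  have En : n * (K * g) = D * C := Nat.div_mul_cancel hKgDC
  have hKg0 : 0 < K * g := Nat.mul_pos hK0 (Nat.gcd_pos_of_pos_left C hK0)
  have hDC0 : 0 < D * C := Nat.mul_pos hD hC0
  have hβ0 : 0 < β := Nat.div_pos (Nat.le_of_dvd hKg0 hαKg) hα0
  have hn0 : 0 < n := Nat.div_pos (Nat.le_of_dvd hDC0 hKgDC) hKg0
  -- coprimality facts
  have hβKK : β ∣ K * K := (Nat.div_dvd_of_dvd hαKg).trans (mul_dvd_mul_left K hgK)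
  have hcop_n : Nat.Coprime β n :=
    Nat.Coprime.coprime_dvd_left (Nat.div_dvd_of_dvd hαKg)
      (aux_coprime_stmt7 D C K hD hsq hC hC0 hK)
  -- move to ℤ
  set w : ℤ := (r : ℤ) * (s : ℤ) ^ 2 * (t : ℤ) * x with hw
  have hKrst' : Nat.Coprime K (r * s * t) := hKrst
  have hKr : IsCoprime (K : ℤ) (r : ℤ) :=
    Nat.isCoprime_iff_coprime.mpr
      (hKrst'.coprime_dvd_right ((dvd_mul_right r s).trans (dvd_mul_right _ t)))
  have hKs : IsCoprime (K : ℤ) (s : ℤ) :=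
    Nat.isCoprime_iff_coprime.mpr
      (hKrst'.coprime_dvd_right ((dvd_mul_left s r).trans (dvd_mul_right _ t)))
  have hKt : IsCoprime (K : ℤ) (t : ℤ) :=
    Nat.isCoprime_iff_coprime.mpr (hKrst'.coprime_dvd_right (dvd_mul_left t (r * s)))
  have hKx : IsCoprime (K : ℤ) x := by
    have hxD : IsCoprime x (D : ℤ) := Int.isCoprime_iff_gcd_eq_one.mpr hx
    exact IsCoprime.of_isCoprime_of_dvd_left hxD.symm (Int.natCast_dvd_natCast.mpr hK)
  have hKw : IsCoprime (K : ℤ) w :=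
    ((hKr.mul_right (hKs.pow_right)).mul_right hKt).mul_right hKx
  have hβw : IsCoprime (β : ℤ) w := by
    have : IsCoprime ((K : ℤ) * K) w := hKw.mul_left hKw
    exact IsCoprime.of_isCoprime_of_dvd_left this
      (by exact_mod_cast Int.natCast_dvd_natCast.mpr hβKK)
  have hβn : IsCoprime (β : ℤ) (n : ℤ) := Nat.isCoprime_iff_coprime.mpr hcop_n
  have hβnw : IsCoprime (β : ℤ) ((n : ℤ) * w) := hβn.mul_right hβw
  obtain ⟨u, v, huv⟩ := hβnw
  -- the explicit matrix
  refine ⟨(β : ℤ) * (1 + (n : ℤ) * v * w), -v * w ^ 2, v * (n : ℤ), u, ?_, ?_⟩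
  · -- determinant
    linear_combination (1 + (n : ℤ) * v * w) * huv
  · -- the Möbius equation
    have hnQ : ((n : ℕ) : ℚ) ≠ 0 := by exact_mod_cast hn0.ne'
    have hβQ : ((β : ℕ) : ℚ) ≠ 0 := by exact_mod_cast hβ0.ne'
    have hαQ : ((α : ℕ) : ℚ) ≠ 0 := by exact_mod_cast hα0.ne'
    have hDCQ : ((D : ℚ) * C) = (n : ℚ) * β * α := by
      have : ((n * (β * α) : ℕ) : ℚ) = ((D * C : ℕ) : ℚ) := by
        rw [Eβ, En]
      push_cast at this
      linarith [this]
    have hwQ : ((w : ℤ) : ℚ) = (r : ℚ) * s ^ 2 * t * x := by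
      rw [hw]; push_cast; ring
    have huvQ : (u : ℚ) * β + v * ((n : ℚ) * ((w : ℤ) : ℚ)) = 1 := by
      exact_mod_cast huv
    have hq₁' : q₁ = ((w : ℤ) : ℚ) / ((n : ℚ) * β) := by
      rw [hq₁, hDCQ, hwQ]
      field_simp
    have hq₂' : q₂ = ((w : ℤ) : ℚ) * β / (n : ℚ) := by
      rw [hq₂, hwQ]
      ring
    rw [hq₁', hq₂']
    push_cast
    field_simp
    linear_combination (-((w : ℤ) : ℚ)) * huvQ
end

section
/- Let D be a positive squarefree integer and C a positive divisor of D. Let r, s, t be positive integers with r ∣ D/C, s ∣ C, t ∣ C and gcd(s, t) = 1, and let x be an integer with gcd(x, D) = 1. Let K be a positive divisor of t and α a positive divisor of K. Then the rational numbers (r·s²·t·α·x)/(D·C) and (r·s²·(t/K)·((K/α)·x))/((D·C)/K²) are Γ₀((D·C)/K²)-equivalent. -/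
/-- for `K` a positive divisor of `t` and `α` a positive divisor of `K`, the
cusps `(r·s²·t·α·x)/(D·C)` and `(r·s²·(t/K)·((K/α)·x))/((D·C)/K²)` are
`Γ₀((D·C)/K²)`-equivalent. -/
theorem stmt_8 (D C : ℕ) (hD : 0 < D) (hsq : Squarefree D) (hC : C ∣ D) (hC0 : 0 < C)
    (r s t : ℕ) (hr0 : 0 < r) (hs0 : 0 < s) (ht0 : 0 < t)
    (hr : r ∣ D / C) (hs : s ∣ C) (ht : t ∣ C) (hst : Nat.gcd s t = 1)
    (x : ℤ) (hx : Int.gcd x (D : ℤ) = 1)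
    (K : ℕ) (hK0 : 0 < K) (hK : K ∣ t)
    (α : ℕ) (hα0 : 0 < α) (hα : α ∣ K)
    (q₁ q₂ : ℚ)
    (hq₁ : q₁ = (r * s ^ 2 * t * α : ℚ) * (x : ℚ) / (D * C : ℚ))
    (hq₂ : q₂ = (r * s ^ 2 * (t / K : ℕ) : ℚ) * (((K / α : ℕ) : ℚ) * (x : ℚ)) /
        ((D * C / K ^ 2 : ℕ) : ℚ)) :
    ∃ a b c d : ℤ,
      a * d - b * ((D * C / K ^ 2 : ℕ) : ℤ) * c = 1 ∧
      (a : ℚ) * q₁ + (b : ℚ) =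
        q₂ * (((D * C / K ^ 2 : ℕ) : ℚ) * (c : ℚ) * q₁ + (d : ℚ)) := by
  -- decompositions
  obtain ⟨D₁, hD₁⟩ : ∃ d, D = C * d := ⟨D / C, (Nat.mul_div_cancel' hC).symm⟩
  have hDiv : D / C = D₁ := by rw [hD₁, Nat.mul_div_cancel_left _ hC0]
  have hsqD : Squarefree (C * D₁) := hD₁ ▸ hsq
  obtain ⟨hcopCD₁, hsqC, hsqD₁⟩ := Nat.squarefree_mul_iff.mp hsqD
  obtain ⟨C₁, hC₁⟩ : ∃ c, C = t * c := ⟨C / t, (Nat.mul_div_cancel' ht).symm⟩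
  obtain ⟨hcoptC₁, hsqt, hsqC₁⟩ := Nat.squarefree_mul_iff.mp (hC₁ ▸ hsqC)
  obtain ⟨t', ht'⟩ : ∃ c, t = K * c := ⟨t / K, (Nat.mul_div_cancel' hK).symm⟩
  obtain ⟨hcopKt', hsqK, hsqt'⟩ := Nat.squarefree_mul_iff.mp (ht' ▸ hsqt)
  obtain ⟨β, hβ⟩ : ∃ c, K = α * c := ⟨K / α, (Nat.mul_div_cancel' hα).symm⟩
  obtain ⟨hcopαβ, hsqα, hsqβ⟩ := Nat.squarefree_mul_iff.mp (hβ ▸ hsqK)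
  have hst' : Nat.Coprime s t := hst
  have hsC₁ : s ∣ C₁ := hst'.dvd_of_dvd_mul_left (hC₁ ▸ hs)
  obtain ⟨C₂, hC₂⟩ := hsC₁
  obtain ⟨R, hR⟩ := hDiv ▸ hr
  -- positivity
  have hβ0 : 0 < β := Nat.pos_of_mul_pos_left (a := α) (by rw [← hβ]; exact hK0)
  have ht'0 : 0 < t' := Nat.pos_of_mul_pos_left (a := K) (by rw [← ht']; exact ht0)
  have hR0 : 0 < R := by
    have : 0 < D₁ := Nat.pos_of_mul_pos_left (a := C) (by rw [← hD₁]; exact hD)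
    exact Nat.pos_of_mul_pos_left (a := r) (by rw [← hR]; exact this)
  have hC₂0 : 0 < C₂ := by
    have : 0 < C₁ := Nat.pos_of_mul_pos_left (a := t) (by rw [← hC₁]; exact hC0)
    exact Nat.pos_of_mul_pos_left (a := s) (by rw [← hC₂]; exact this)
  -- the key natural numbers
  set m' : ℕ := R * t' * C₂ ^ 2 with hm'def
  set e : ℕ := r * s ^ 2 * t' with hedef
  have hm'0 : 0 < m' := by positivity
  have he0 : 0 < e := by positivity
  -- numeric identities
  have hDC : D * C = (β * m') * (r * s ^ 2 * t * α) := by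
    subst hD₁ hC₁ ht' hβ hC₂ hR; ring
  have hNval : D * C / K ^ 2 = m' * e := by
    refine Nat.div_eq_of_eq_mul_left (by positivity) ?_
    subst hD₁ hC₁ ht' hβ hC₂ hR; ring
  have ht'val : t / K = t' := by
    refine Nat.div_eq_of_eq_mul_left hK0 ?_; rw [ht', mul_comm]
  have hβval : K / α = β := by
    refine Nat.div_eq_of_eq_mul_left hα0 ?_; rw [hβ, mul_comm]
  -- coprimality facts (ℕ)
  have hβK : β ∣ K := ⟨α, by rw [hβ, mul_comm]⟩
  have hβC : β ∣ C := (hβK.trans hK).trans ht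
  have hβt : β ∣ t := hβK.trans hK
  have cβR : Nat.Coprime β R :=
    (hcopCD₁.coprime_dvd_left hβC).coprime_dvd_right (hR ▸ Dvd.intro_left r rfl)
  have crβ : Nat.Coprime r β :=
    (hcopCD₁.symm.coprime_dvd_left (hDiv ▸ hr)).coprime_dvd_right hβC
  have csβ : Nat.Coprime s β := (Nat.Coprime.coprime_dvd_right hβt hst')
  have cβt' : Nat.Coprime β t' := hcopKt'.coprime_dvd_left hβK
  have cβC₂ : Nat.Coprime β C₂ :=
    (hcoptC₁.coprime_dvd_left hβt).coprime_dvd_right (hC₂ ▸ Dvd.intro_left s rfl)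
  have cβm' : Nat.Coprime β m' := ((cβR.mul_right cβt').mul_right (cβC₂.pow_right 2))
  have ceβ : Nat.Coprime e β := ((crβ.mul (Nat.Coprime.pow_left 2 csβ)).mul cβt'.symm)
  -- integer coprimality with x
  have copxD : IsCoprime x (D : ℤ) := Int.isCoprime_iff_gcd_eq_one.mpr hx
  have copxC : IsCoprime x (C : ℤ) :=
    copxD.of_isCoprime_of_dvd_right (Int.natCast_dvd_natCast.mpr hC)
  have copxDC : IsCoprime x ((D : ℤ) * (C : ℤ)) := copxD.mul_right copxC
  have hMdvd : ((β : ℤ) * (m' : ℤ)) ∣ (D : ℤ) * (C : ℤ) := by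
    have : ((β * m' : ℕ) : ℤ) ∣ ((D * C : ℕ) : ℤ) :=
      Int.natCast_dvd_natCast.mpr ⟨_, hDC⟩
    push_cast at this; exact this
  have copxM : IsCoprime x ((β : ℤ) * (m' : ℤ)) := copxDC.of_isCoprime_of_dvd_right hMdvd
  have copβm'Z : IsCoprime ((β : ℤ)) ((m' : ℤ)) := Nat.Coprime.isCoprime cβm'
  have copxm'Z : IsCoprime x ((m' : ℤ)) :=
    copxM.of_isCoprime_of_dvd_right (dvd_mul_left _ _)
  have copβxm' : IsCoprime ((β : ℤ) * x) ((m' : ℤ)) := copβm'Z.mul_left copxm'Z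
  -- the gcd adjustment
  set g : ℕ := Int.gcd ((β : ℤ) * (m' : ℤ)) (e : ℤ) with hgdef
  set A : ℤ := Int.gcdA ((β : ℤ) * (m' : ℤ)) (e : ℤ) with hAdef
  set B : ℤ := Int.gcdB ((β : ℤ) * (m' : ℤ)) (e : ℤ) with hBdef
  have hbez : (g : ℤ) = ((β : ℤ) * (m' : ℤ)) * A + (e : ℤ) * B := Int.gcd_eq_gcd_ab _ _
  have hgM : (g : ℤ) ∣ (β : ℤ) * (m' : ℤ) := Int.gcd_dvd_left _ _
  have hge : (g : ℤ) ∣ (e : ℤ) := Int.gcd_dvd_right _ _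
  have hgβ : IsCoprime (g : ℤ) (β : ℤ) :=
    (Nat.Coprime.isCoprime ceβ).of_isCoprime_of_dvd_left hge
  have hgm' : (g : ℤ) ∣ (m' : ℤ) := hgβ.dvd_of_dvd_mul_left hgM
  have copxg : IsCoprime x (g : ℤ) := copxM.of_isCoprime_of_dvd_right hgM
  obtain ⟨z, y, h1⟩ := copxM
  obtain ⟨w, u, h2⟩ := copβxm'
  have h3 : x * (z - (β : ℤ) * w) = u * (m' : ℤ) - y * ((β : ℤ) * (m' : ℤ)) := by
    linear_combination h1 - h2
  have hgv : (g : ℤ) ∣ z - (β : ℤ) * w := by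
    have hd : (g : ℤ) ∣ x * (z - (β : ℤ) * w) := by
      rw [h3]; exact dvd_sub (hgm'.mul_left u) (hgM.mul_left y)
    exact copxg.symm.dvd_of_dvd_mul_left hd
  obtain ⟨w₁, hw₁⟩ := hgv
  obtain ⟨z₂, hz₂⟩ : ∃ v : ℤ, v = z - ((β : ℤ) * (m' : ℤ)) * (A * w₁) := ⟨_, rfl⟩
  obtain ⟨y₂, hy₂⟩ : ∃ v : ℤ, v = y + x * (A * w₁) := ⟨_, rfl⟩
  have h1' : z₂ * x + y₂ * ((β : ℤ) * (m' : ℤ)) = 1 := by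
    rw [hz₂, hy₂]; linear_combination h1
  have hadj : z₂ - (β : ℤ) * w = (e : ℤ) * (B * w₁) := by
    rw [hz₂]; linear_combination hw₁ + w₁ * hbez
  have hNZ : ((D * C / K ^ 2 : ℕ) : ℤ) = (m' : ℤ) * (e : ℤ) := by exact_mod_cast hNval
  refine ⟨(β : ℤ) * x * z₂ + u * ((β : ℤ) * (m' : ℤ)), (β : ℤ) * x * y₂ - u * x,
    B * w₁, (m' : ℤ) * y₂ + w * x, ?_, ?_⟩
  · linear_combination (w * ((β : ℤ) * x) + u * (m' : ℤ)) * h1' + h2 -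
      ((β : ℤ) * x * y₂ - u * x) * (B * w₁) * hNZ +
      ((β : ℤ) * x * y₂ - u * x) * (m' : ℤ) * hadj
  · -- rationals
    have F1 : ((β : ℤ) * x * z₂ + u * ((β : ℤ) * (m' : ℤ))) * x +
        ((β : ℤ) * x * y₂ - u * x) * ((β : ℤ) * (m' : ℤ)) = (β : ℤ) * x := by
      linear_combination ((β : ℤ) * x) * h1'
    have F2 : ((m' : ℤ) * (e : ℤ)) * (B * w₁) * x +
        ((m' : ℤ) * y₂ + w * x) * ((β : ℤ) * (m' : ℤ)) = (m' : ℤ) := by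
      linear_combination - (m' : ℤ) * x * hadj + (m' : ℤ) * h1'
    have hβ0' : ((β : ℚ)) ≠ 0 := by positivity
    have hm'0' : ((m' : ℚ)) ≠ 0 := by positivity
    have hq₁' : q₁ = (x : ℚ) / ((β : ℚ) * (m' : ℚ)) := by
      rw [hq₁, div_eq_div_iff (by positivity) (by positivity)]
      have hDCQ : ((D : ℚ)) * (C : ℚ) = ((β : ℚ) * (m' : ℚ)) * ((r : ℚ) * (s : ℚ) ^ 2 * (t : ℚ) * (α : ℚ)) := by
        exact_mod_cast congrArg (fun n : ℕ => (n : ℚ)) hDC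
      linear_combination (-(x : ℚ)) * hDCQ
    have hq₂' : q₂ = (β : ℚ) * (x : ℚ) / (m' : ℚ) := by
      rw [hq₂, ht'val, hβval, hNval, div_eq_div_iff (by positivity) (by positivity)]
      have heQ : ((e : ℚ)) = (r : ℚ) * (s : ℚ) ^ 2 * (t' : ℚ) := by exact_mod_cast congrArg (fun n : ℕ => (n : ℚ)) hedef
      push_cast
      linear_combination (-((β : ℚ) * (x : ℚ) * (m' : ℚ))) * heQ
    have F1Q : (((β : ℤ) * x * z₂ + u * ((β : ℤ) * (m' : ℤ)) : ℤ) : ℚ) * (x : ℚ) +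
        (((β : ℤ) * x * y₂ - u * x : ℤ) : ℚ) * ((β : ℚ) * (m' : ℚ)) = (β : ℚ) * (x : ℚ) := by
      exact_mod_cast congrArg (fun n : ℤ => (n : ℚ)) F1
    have F2Q : ((m' : ℚ) * (e : ℚ)) * ((B * w₁ : ℤ) : ℚ) * (x : ℚ) +
        (((m' : ℤ) * y₂ + w * x : ℤ) : ℚ) * ((β : ℚ) * (m' : ℚ)) = (m' : ℚ) := by
      exact_mod_cast congrArg (fun n : ℤ => (n : ℚ)) F2
    have hNQ : ((D * C / K ^ 2 : ℕ) : ℚ) = (m' : ℚ) * (e : ℚ) := by exact_mod_cast hNval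
    rw [hq₁', hq₂', hNQ]
    push_cast at F1Q F2Q ⊢
    field_simp
    have hadjQ : (z₂ : ℚ) - (β : ℚ) * (w : ℚ) = (e : ℚ) * ((B : ℚ) * (w₁ : ℚ)) := by
      exact_mod_cast congrArg (fun n : ℤ => (n : ℚ)) hadj
    linear_combination ((x : ℚ) ^ 2) * hadjQ
end

section
/- Let D be a positive squarefree integer, C a positive divisor of D, and M, L positive divisors of D with D ∣ M·L and M·L ∣ D·C. Let f be a positive divisor of gcd(M, L), let χ be a primitive quadratic Dirichlet character of conductor f, and let η be a Dirichlet character of modulus m with gcd(m, D) = 1. Define a : ℕ → ℂ by a(n) = 0 if gcd(n, gcd(M, L)/f) > 1, and otherwise a(n) = χ(n)·η(n)·(∏_{p ∣ D/M} p^{v_p(n)})·(Σ_{d ∣ n, gcd(d, D/f) = 1} d), where the product is over the primes p dividing D/M. Then for every complex number s with Re(s) > 2, the Dirichlet series Σ_{n≥1} a(n)·n^{−s} converges and equals ∏_{p ∣ M/f} (1 − χ(p)η(p)·p^{1−s}) · ∏_{p ∣ L/f} (1 − χ(p)η(p)·p^{−s}) · (Σ_{n≥1} χ(n)η(n)·n^{1−s})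 · (Σ_{n≥1} χ(n)η(n)·n^{−s}), where the finite products are over the primes dividing M/f and L/f respectively. -/
open scoped BigOperators

set_option linter.unusedSectionVars false
set_option linter.unusedVariables false
set_option maxHeartbeats 1000000

namespace Stmt12Aux

lemma coprime_div_of_squarefree {N f : ℕ} (hN : Squarefree N) (hf : f ∣ N) :
    Nat.Coprime (N / f) f := by
  by_contra hc
  obtain ⟨p, hp, hp1, hp2⟩ := Nat.Prime.not_coprime_iff_dvd.mp hc
  have hpp : p * p ∣ N := by
    rw [← Nat.div_mul_cancel hf]; exact mul_dvd_mul hp1 hp2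
  exact absurd (Nat.isUnit_iff.mp (hN p hpp)) hp.one_lt.ne'

lemma prime_dvd_div_iff {N f q : ℕ} (hN : Squarefree N) (hf : f ∣ N) (hq : q.Prime) :
    q ∣ N / f ↔ q ∣ N ∧ ¬q ∣ f := by
  have hcop := coprime_div_of_squarefree hN hf
  constructor
  · intro hd
    refine ⟨hd.trans (Nat.div_dvd_of_dvd hf), fun hqf => ?_⟩
    exact hq.one_lt.ne' (Nat.eq_one_of_dvd_one (Nat.dvd_gcd hd hqf |>.trans hcop.dvd))
  · rintro ⟨hdN, hndf⟩
    have : q ∣ N / f * f := by rw [Nat.div_mul_cancel hf]; exact hdN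
    rcases (Nat.Prime.dvd_mul hq).mp this with h | h
    · exact h
    · exact absurd h hndf

lemma sum_moebius_indicator (N : ℕ) :
    ∑ d ∈ N.divisors, (ArithmeticFunction.moebius d : ℂ) = if N = 1 then 1 else 0 := by
  have h2 : ((ArithmeticFunction.moebius * ArithmeticFunction.zeta :
      ArithmeticFunction ℤ) N : ℂ) = if N = 1 then 1 else 0 := by
    rw [ArithmeticFunction.moebius_mul_coe_zeta]
    rcases eq_or_ne N 1 with rfl | hN
    · simp
    · simp [ArithmeticFunction.one_apply, hN]
  rw [ArithmeticFunction.coe_mul_zeta_apply] at h2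
  push_cast at h2
  exact h2

lemma sum_div_moebius_eq_prod {N : ℕ} (hN : Squarefree N) (h : ℕ → ℂ)
    (h1 : h 1 = 1) (hmul : ∀ x y, h (x * y) = h x * h y) :
    ∑ d ∈ N.divisors, (ArithmeticFunction.moebius d : ℂ) * h d
      = ∏ p ∈ N.primeFactors, (1 - h p) := by
  let F : ArithmeticFunction ℂ := ⟨fun n => if n = 0 then 0 else h n, by simp⟩
  have hFapp : ∀ {d : ℕ}, d ≠ 0 → F d = h d := fun {d} hd => by
    show (if d = 0 then 0 else h d) = h d
    simp [hd]
  have hF : F.IsMultiplicative := by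
    constructor
    · rw [hFapp one_ne_zero, h1]
    · intro x y _
      show (if x * y = 0 then 0 else h (x * y))
          = (if x = 0 then 0 else h x) * (if y = 0 then 0 else h y)
      rcases eq_or_ne x 0 with rfl | hx
      · simp
      rcases eq_or_ne y 0 with rfl | hy
      · simp
      simp [hx, hy, Nat.mul_ne_zero hx hy, hmul]
  rw [show ∑ d ∈ N.divisors, (ArithmeticFunction.moebius d : ℂ) * h d
      = ∑ d ∈ N.divisors, (ArithmeticFunction.moebius d : ℂ) * F d from
    Finset.sum_congr rfl fun d hd => by
      rw [hFapp (Nat.pos_of_mem_divisors hd).ne']]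
  rw [← ArithmeticFunction.IsMultiplicative.prodPrimeFactors_one_sub_of_squarefree F hF hN]
  refine Finset.prod_congr rfl fun p hp => ?_
  rw [hFapp (Nat.prime_of_mem_primeFactors hp).ne_zero]


variable {D M L f n : ℕ}

section

variable (hsq : Squarefree D) (hD : 0 < D) (hM0 : 0 < M) (hL0 : 0 < L)
  (hM : M ∣ D) (hL : L ∣ D) (hDML : D ∣ M * L) (hf0 : 0 < f) (hf : f ∣ Nat.gcd M L)

include hsq hD hM0 hL0 hM hL hDML hf0 hf

lemma key_empty (hn : n ≠ 0) (hbig : 1 < Nat.gcd n (Nat.gcd M L / f)) :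
    n.divisors.filter
        (fun d => Nat.gcd d (M / f) = 1 ∧ Nat.gcd (n / d) (L / f) = 1) = ∅ := by
  have hfM : f ∣ M := hf.trans (Nat.gcd_dvd_left M L)
  have hfL : f ∣ L := hf.trans (Nat.gcd_dvd_right M L)
  have hg : Nat.gcd M L ∣ D := (Nat.gcd_dvd_left M L).trans hM
  obtain ⟨q, hq, hq1⟩ := Nat.exists_prime_and_dvd (n := Nat.gcd n (Nat.gcd M L / f))
    (by omega)
  have hqn : q ∣ n := hq1.trans (Nat.gcd_dvd_left _ _)
  have hqgf : q ∣ Nat.gcd M L / f := hq1.trans (Nat.gcd_dvd_right _ _)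
  have hqg := (prime_dvd_div_iff (hsq.squarefree_of_dvd hg) hf hq).mp hqgf
  have hqMf : q ∣ M / f := (prime_dvd_div_iff (hsq.squarefree_of_dvd hM) hfM hq).mpr
    ⟨hqg.1.trans (Nat.gcd_dvd_left M L), hqg.2⟩
  have hqLf : q ∣ L / f := (prime_dvd_div_iff (hsq.squarefree_of_dvd hL) hfL hq).mpr
    ⟨hqg.1.trans (Nat.gcd_dvd_right M L), hqg.2⟩
  rw [Finset.filter_eq_empty_iff]
  rintro d hd ⟨h1, h2⟩
  have hdn : d ∣ n := (Nat.mem_divisors.mp hd).1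
  have : q ∣ d * (n / d) := by rw [Nat.mul_div_cancel' hdn]; exact hqn
  rcases (Nat.Prime.dvd_mul hq).mp this with h | h
  · exact hq.one_lt.ne' (Nat.eq_one_of_dvd_one ((Nat.dvd_gcd h hqMf).trans h1.dvd))
  · exact hq.one_lt.ne' (Nat.eq_one_of_dvd_one ((Nat.dvd_gcd h hqLf).trans h2.dvd))

lemma key_sum (hn : n ≠ 0) (hgcd : Nat.gcd n (Nat.gcd M L / f) = 1) :
    ∑ d ∈ n.divisors.filter
        (fun d => Nat.gcd d (M / f) = 1 ∧ Nat.gcd (n / d) (L / f) = 1), d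
      = (∏ p ∈ (D / M).primeFactors, p ^ (n.factorization p)) *
        ∑ e ∈ n.divisors.filter (fun e => Nat.gcd e (D / f) = 1), e := by
  have hfM : f ∣ M := hf.trans (Nat.gcd_dvd_left M L)
  have hfL : f ∣ L := hf.trans (Nat.gcd_dvd_right M L)
  have hfD : f ∣ D := hfM.trans hM
  have hg : Nat.gcd M L ∣ D := (Nat.gcd_dvd_left M L).trans hM
  have hDM : D / M ∣ D := Nat.div_dvd_of_dvd hM
  -- prime classification helpers
  have hMf : ∀ q : ℕ, q.Prime → (q ∣ M / f ↔ q ∣ M ∧ ¬q ∣ f) :=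
    fun q hq => prime_dvd_div_iff (hsq.squarefree_of_dvd hM) hfM hq
  have hLf : ∀ q : ℕ, q.Prime → (q ∣ L / f ↔ q ∣ L ∧ ¬q ∣ f) :=
    fun q hq => prime_dvd_div_iff (hsq.squarefree_of_dvd hL) hfL hq
  have hDf : ∀ q : ℕ, q.Prime → (q ∣ D / f ↔ q ∣ D ∧ ¬q ∣ f) :=
    fun q hq => prime_dvd_div_iff hsq hfD hq
  have hDMp : ∀ q : ℕ, q.Prime → (q ∣ D / M ↔ q ∣ D ∧ ¬q ∣ M) :=
    fun q hq => prime_dvd_div_iff hsq hM hq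
  have hgf : ∀ q : ℕ, q.Prime → (q ∣ Nat.gcd M L / f ↔ q ∣ Nat.gcd M L ∧ ¬q ∣ f) :=
    fun q hq => prime_dvd_div_iff (hsq.squarefree_of_dvd hg) hf hq
  -- if q ∣ D and ¬ q ∣ M then q ∣ L
  have hDnotM : ∀ q : ℕ, q.Prime → q ∣ D → ¬q ∣ M → q ∣ L := by
    intro q hq hqD hqM
    rcases (Nat.Prime.dvd_mul hq).mp (hqD.trans hDML) with h | h
    · exact absurd h hqM
    · exact h
  set K := ∏ p ∈ (D / M).primeFactors, p ^ (n.factorization p) with hK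
  have hK0 : K ≠ 0 := Finset.prod_ne_zero_iff.mpr fun p hp =>
    pow_ne_zero _ (Nat.prime_of_mem_primeFactors hp).ne_zero
  have hKfact : ∀ q : ℕ,
      K.factorization q = if q ∈ (D / M).primeFactors then n.factorization q else 0 := by
    intro q
    rw [hK, Nat.factorization_prod
      (fun p hp => pow_ne_zero _ (Nat.prime_of_mem_primeFactors hp).ne_zero)]
    simp only [Finsupp.coe_finset_sum, Finset.sum_apply]
    have hcong : (∑ p ∈ (D / M).primeFactors, (p ^ n.factorization p).factorization q)
        = ∑ p ∈ (D / M).primeFactors, (if p = q then n.factorization p else 0) :=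
      Finset.sum_congr rfl (fun p hp => by
        rw [(Nat.prime_of_mem_primeFactors hp).factorization_pow, Finsupp.single_apply])
    rw [hcong]
    exact Finset.sum_ite_eq' ((D / M).primeFactors) q (fun p => n.factorization p)
  have hKdvdn : K ∣ n := by
    rw [← Nat.factorization_le_iff_dvd hK0 hn]
    intro q
    rw [hKfact]
    split <;> simp
  have hKprime : ∀ q : ℕ, q.Prime → q ∣ K → q ∣ D / M ∧ q ∣ n := by
    intro q hq hqK
    have h1 := (Nat.Prime.dvd_iff_one_le_factorization hq hK0).mp hqK
    rw [hKfact] at h1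
    by_cases hmem : q ∈ (D / M).primeFactors
    · rw [if_pos hmem] at h1
      exact ⟨Nat.dvd_of_mem_primeFactors hmem,
        (Nat.Prime.dvd_iff_one_le_factorization hq hn).mpr h1⟩
    · rw [if_neg hmem] at h1; omega
  -- K ∣ d for d in the LHS filter
  have hKdvdd : ∀ d, d ∣ n → Nat.gcd (n / d) (L / f) = 1 → K ∣ d := by
    intro d hdn h2
    have hd0 : d ≠ 0 := fun h => hn (by simpa [h] using (Nat.eq_zero_of_zero_dvd (h ▸ hdn)))
    rw [← Nat.factorization_le_iff_dvd hK0 hd0]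
    intro q
    rw [hKfact]
    by_cases hmem : q ∈ (D / M).primeFactors
    · rw [if_pos hmem]
      have hq := Nat.prime_of_mem_primeFactors hmem
      have hqDM := Nat.dvd_of_mem_primeFactors hmem
      have hqD : q ∣ D := hqDM.trans hDM
      have hqM : ¬q ∣ M := ((hDMp q hq).mp hqDM).2
      have hqL : q ∣ L := hDnotM q hq hqD hqM
      have hqf : ¬q ∣ f := fun h => hqM (h.trans hfM)
      have hqLf : q ∣ L / f := (hLf q hq).mpr ⟨hqL, hqf⟩
      have hqnd : ¬q ∣ n / d := fun h =>
        hq.one_lt.ne' (Nat.eq_one_of_dvd_one ((Nat.dvd_gcd h hqLf).trans h2.dvd))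
      have hnd0 : n / d ≠ 0 := fun h => hn (by
        rw [← Nat.mul_div_cancel' hdn, h, mul_zero])
      have heq : n = d * (n / d) := (Nat.mul_div_cancel' hdn).symm
      have : n.factorization q = d.factorization q + (n / d).factorization q := by
        conv_lhs => rw [heq]
        rw [Nat.factorization_mul hd0 hnd0]
        simp [Finsupp.add_apply]
      have hz : (n / d).factorization q = 0 := by
        by_contra hc
        exact hqnd ((Nat.Prime.dvd_iff_one_le_factorization hq hnd0).mpr (by omega))
      omega
    · rw [if_neg hmem]; exact Nat.zero_le _
  have hDM0 : D / M ≠ 0 := (Nat.div_pos (Nat.le_of_dvd hD hM) hM0).ne'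
  have hKdvdd' : ∀ d ∈ n.divisors.filter
      (fun d => Nat.gcd d (M / f) = 1 ∧ Nat.gcd (n / d) (L / f) = 1), K ∣ d := by
    intro d hd
    simp only [Finset.mem_filter, Nat.mem_divisors] at hd
    exact hKdvdd d hd.1.1 hd.2.2
  rw [Finset.mul_sum]
  refine Finset.sum_nbij' (fun d => d / K) (fun e => K * e) ?_ ?_ ?_ ?_ ?_
  · -- forward membership
    intro d hd
    have hKd := hKdvdd' d hd
    simp only [Finset.mem_filter, Nat.mem_divisors] at hd ⊢
    obtain ⟨⟨hdn, -⟩, h1, h2⟩ := hd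
    have hd0 : d ≠ 0 := fun h => hn (by rw [h] at hdn; exact Nat.eq_zero_of_zero_dvd hdn)
    refine ⟨⟨(Nat.div_dvd_of_dvd hKd).trans hdn, hn⟩, ?_⟩
    by_contra hc
    obtain ⟨q, hq, hq1, hq2⟩ := Nat.Prime.not_coprime_iff_dvd.mp hc
    have hqD : q ∣ D := ((hDf q hq).mp hq2).1
    have hqf : ¬ q ∣ f := ((hDf q hq).mp hq2).2
    have hqd : q ∣ d := hq1.trans (Nat.div_dvd_of_dvd hKd)
    by_cases hqM : q ∣ M
    · exact hq.one_lt.ne' (Nat.eq_one_of_dvd_one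
        ((Nat.dvd_gcd hqd ((hMf q hq).mpr ⟨hqM, hqf⟩)).trans h1.dvd))
    · have hqDM : q ∣ D / M := (hDMp q hq).mpr ⟨hqD, hqM⟩
      have hmem : q ∈ (D / M).primeFactors := Nat.mem_primeFactors.mpr ⟨hq, hqDM, hDM0⟩
      have hdK0 : d / K ≠ 0 := fun h => hd0 (by
        rw [← Nat.mul_div_cancel' hKd, h, mul_zero])
      have hfq : d.factorization q = K.factorization q + (d / K).factorization q := by
        conv_lhs => rw [(Nat.mul_div_cancel' hKd).symm]
        rw [Nat.factorization_mul hK0 hdK0]; simp [Finsupp.add_apply]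
      have hKq : K.factorization q = n.factorization q := by rw [hKfact]; exact if_pos hmem
      have hdlen : d.factorization q ≤ n.factorization q :=
        Finsupp.le_def.mp ((Nat.factorization_le_iff_dvd hd0 hn).mpr hdn) q
      have := (Nat.Prime.dvd_iff_one_le_factorization hq hdK0).mp hq1
      omega
  · -- backward membership
    intro e he
    simp only [Finset.mem_filter, Nat.mem_divisors] at he ⊢
    obtain ⟨⟨hen, -⟩, hecop⟩ := he
    have he0 : e ≠ 0 := fun h => hn (by rw [h] at hen; exact Nat.eq_zero_of_zero_dvd hen)
    have hcopKe : Nat.Coprime K e := by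
      by_contra hc
      obtain ⟨q, hq, hq1, hq2⟩ := Nat.Prime.not_coprime_iff_dvd.mp hc
      obtain ⟨hqDM, hqn⟩ := hKprime q hq hq1
      have hqD : q ∣ D := hqDM.trans hDM
      have hqM : ¬ q ∣ M := ((hDMp q hq).mp hqDM).2
      have hqf : ¬ q ∣ f := fun h => hqM (h.trans hfM)
      exact hq.one_lt.ne' (Nat.eq_one_of_dvd_one
        ((Nat.dvd_gcd hq2 ((hDf q hq).mpr ⟨hqD, hqf⟩)).trans hecop.dvd))
    have hKe : K * e ∣ n := hcopKe.mul_dvd_of_dvd_of_dvd hKdvdn hen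
    refine ⟨⟨hKe, hn⟩, ?_, ?_⟩
    · by_contra hc
      obtain ⟨q, hq, hq1, hq2⟩ := Nat.Prime.not_coprime_iff_dvd.mp hc
      have hqM : q ∣ M := ((hMf q hq).mp hq2).1
      have hqf : ¬ q ∣ f := ((hMf q hq).mp hq2).2
      rcases (Nat.Prime.dvd_mul hq).mp hq1 with h | h
      · exact ((hDMp q hq).mp (hKprime q hq h).1).2 hqM
      · exact hq.one_lt.ne' (Nat.eq_one_of_dvd_one
          ((Nat.dvd_gcd h ((hDf q hq).mpr ⟨hqM.trans hM, hqf⟩)).trans hecop.dvd))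
    · by_contra hc
      obtain ⟨q, hq, hq1, hq2⟩ := Nat.Prime.not_coprime_iff_dvd.mp hc
      have hqL : q ∣ L := ((hLf q hq).mp hq2).1
      have hqf : ¬ q ∣ f := ((hLf q hq).mp hq2).2
      have hKe0 : K * e ≠ 0 := Nat.mul_ne_zero hK0 he0
      have ht0 : n / (K * e) ≠ 0 := fun h => hn (by
        rw [← Nat.mul_div_cancel' hKe, h, mul_zero])
      have hqn : q ∣ n := hq1.trans (Nat.div_dvd_of_dvd hKe)
      by_cases hqM : q ∣ M
      · have hqgf : q ∣ Nat.gcd M L / f := (hgf q hq).mpr ⟨Nat.dvd_gcd hqM hqL, hqf⟩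
        exact hq.one_lt.ne' (Nat.eq_one_of_dvd_one
          ((Nat.dvd_gcd hqn hqgf).trans hgcd.dvd))
      · have hqDM : q ∣ D / M := (hDMp q hq).mpr ⟨hqL.trans hL, hqM⟩
        have hmem : q ∈ (D / M).primeFactors := Nat.mem_primeFactors.mpr ⟨hq, hqDM, hDM0⟩
        have hfq : n.factorization q
            = K.factorization q + e.factorization q + (n / (K * e)).factorization q := by
          conv_lhs => rw [(Nat.mul_div_cancel' hKe).symm]
          rw [Nat.factorization_mul hKe0 ht0, Nat.factorization_mul hK0 he0]
          simp [Finsupp.add_apply]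
        have hKq : K.factorization q = n.factorization q := by rw [hKfact]; exact if_pos hmem
        have := (Nat.Prime.dvd_iff_one_le_factorization hq ht0).mp hq1
        omega
  · intro d hd
    exact Nat.mul_div_cancel' (hKdvdd' d hd)
  · intro e _
    exact Nat.mul_div_cancel_left e (Nat.pos_of_ne_zero hK0)
  · intro d hd
    exact (Nat.mul_div_cancel' (hKdvdd' d hd)).symm

end


lemma finite_euler (N : ℕ) (hN : Squarefree N) (hN0 : N ≠ 0) (u h : ℕ → ℂ) (s : ℂ)
    (h1 : h 1 = 1) (hmul : ∀ x y, h (x * y) = h x * h y)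
    (hcomp : ∀ d : ℕ, d ≠ 0 → u d / (d : ℂ) ^ s = h d) :
    LSeriesHasSum (fun d => if d ∣ N then (ArithmeticFunction.moebius d : ℂ) * u d else 0) s
      (∏ p ∈ N.primeFactors, (1 - h p)) := by
  set e : ℕ → ℂ := fun d => if d ∣ N then (ArithmeticFunction.moebius d : ℂ) * u d else 0
    with he
  have hsupp : ∀ d ∉ N.divisors, LSeries.term e s d = 0 := by
    intro d hd
    rcases eq_or_ne d 0 with rfl | hd0
    · exact LSeries.term_zero e s
    · rw [LSeries.term_of_ne_zero hd0]
      have hnd : ¬ d ∣ N := fun hdvd => hd (Nat.mem_divisors.mpr ⟨hdvd, hN0⟩)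
      rw [he]
      simp [hnd]
  have H : HasSum (LSeries.term e s) (∑ d ∈ N.divisors, LSeries.term e s d) :=
    hasSum_sum_of_ne_finset_zero hsupp
  have hsum : ∑ d ∈ N.divisors, LSeries.term e s d
      = ∏ p ∈ N.primeFactors, (1 - h p) := by
    rw [← sum_div_moebius_eq_prod hN h h1 hmul]
    refine Finset.sum_congr rfl fun d hd => ?_
    have hd0 : d ≠ 0 := (Nat.pos_of_mem_divisors hd).ne'
    have hdN : d ∣ N := (Nat.mem_divisors.mp hd).1
    rw [LSeries.term_of_ne_zero hd0, he]
    show (if d ∣ N then (ArithmeticFunction.moebius d : ℂ) * u d else 0) / (d : ℂ) ^ s = _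
    rw [if_pos hdN, mul_div_assoc, hcomp d hd0]
  exact hsum ▸ H


theorem main_aux (D M L f : ℕ) (hsq : Squarefree D) (hD : 0 < D) (hM0 : 0 < M) (hL0 : 0 < L)
    (hM : M ∣ D) (hL : L ∣ D) (hDML : D ∣ M * L) (hf0 : 0 < f) (hf : f ∣ Nat.gcd M L)
    (ν : ℕ → ℂ) (hν1 : ν 1 = 1) (hνmul : ∀ x y : ℕ, ν (x * y) = ν x * ν y)
    (hνb : ∀ n : ℕ, ‖ν n‖ ≤ 1)
    (a : ℕ → ℂ)
    (ha : ∀ n : ℕ, n ≠ 0 → a n =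
      if 1 < Nat.gcd n (Nat.gcd M L / f) then 0
      else ν n * (∏ p ∈ (D / M).primeFactors, (p : ℂ) ^ (n.factorization p)) *
        (∑ d ∈ n.divisors.filter (fun d => Nat.gcd d (D / f) = 1), (d : ℂ)))
    (s : ℂ) (hs : 2 < s.re) :
    LSeriesHasSum a s
      ((∏ p ∈ (M / f).primeFactors, (1 - ν p * (p : ℂ) ^ ((1 : ℂ) - s))) *
       (∏ p ∈ (L / f).primeFactors, (1 - ν p * (p : ℂ) ^ (-s))) *
       LSeries ν (s - 1) * LSeries ν s) := by
  have hfM : f ∣ M := hf.trans (Nat.gcd_dvd_left M L)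
  have hfL : f ∣ L := hf.trans (Nat.gcd_dvd_right M L)
  have hMf0 : M / f ≠ 0 := (Nat.div_pos (Nat.le_of_dvd hM0 hfM) hf0).ne'
  have hLf0 : L / f ≠ 0 := (Nat.div_pos (Nat.le_of_dvd hL0 hfL) hf0).ne'
  have hs1 : 1 < s.re := by linarith
  have hs1' : 1 < (s - 1).re := by
    rw [Complex.sub_re, Complex.one_re]; linarith
  have Sν : LSeriesSummable ν s := LSeriesSummable_of_bounded_of_one_lt_re (fun n _ => hνb n) hs1
  have Sν' : LSeriesSummable ν (s - 1) :=
    LSeriesSummable_of_bounded_of_one_lt_re (fun n _ => hνb n) hs1'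
  have Hc : LSeriesHasSum ν s (LSeries ν s) := Sν.LSeriesHasSum
  -- the function n ↦ ν n * n has L-series L(ν, s-1) at s
  have Hb : LSeriesHasSum (fun n : ℕ => ν n * (n : ℂ)) s (LSeries ν (s - 1)) := by
    have ht : LSeries.term (fun n : ℕ => ν n * (n : ℂ)) s = LSeries.term ν (s - 1) := by
      funext n
      rcases eq_or_ne n 0 with rfl | hn
      · rw [LSeries.term_zero, LSeries.term_zero]
      · have hn0 : (n : ℂ) ≠ 0 := Nat.cast_ne_zero.mpr hn
        rw [LSeries.term_of_ne_zero hn, LSeries.term_of_ne_zero hn]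
        have hpow : (n : ℂ) ^ s = (n : ℂ) ^ (s - 1) * n := by
          conv_lhs => rw [show s = s - 1 + 1 by ring]
          rw [Complex.cpow_add _ _ hn0, Complex.cpow_one]
        show ν n * (n : ℂ) / (n : ℂ) ^ s = ν n / (n : ℂ) ^ (s - 1)
        rw [hpow]
        exact mul_div_mul_right _ _ hn0
    show HasSum (LSeries.term (fun n : ℕ => ν n * (n : ℂ)) s) _
    rw [ht]
    exact Sν'.LSeriesHasSum
  -- the two finite Euler factors
  have HeM : LSeriesHasSum
      (fun d => if d ∣ M / f then (ArithmeticFunction.moebius d : ℂ) * (ν d * (d : ℂ)) else 0) s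
      (∏ p ∈ (M / f).primeFactors, (1 - ν p * (p : ℂ) ^ ((1 : ℂ) - s))) := by
    refine finite_euler (M / f) (hsq.squarefree_of_dvd ((Nat.div_dvd_of_dvd hfM).trans hM))
      hMf0 _ (fun d => ν d * (d : ℂ) ^ ((1 : ℂ) - s)) s ?_ ?_ ?_
    · simp [hν1]
    · intro x y
      show ν (x * y) * ((x * y : ℕ) : ℂ) ^ ((1 : ℂ) - s)
          = (ν x * (x : ℂ) ^ ((1 : ℂ) - s)) * (ν y * (y : ℂ) ^ ((1 : ℂ) - s))
      rw [hνmul, Nat.cast_mul, Complex.natCast_mul_natCast_cpow]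
      ring
    · intro d hd0
      have hdc : (d : ℂ) ≠ 0 := Nat.cast_ne_zero.mpr hd0
      show ν d * (d : ℂ) / (d : ℂ) ^ s = ν d * (d : ℂ) ^ ((1 : ℂ) - s)
      rw [show (d : ℂ) ^ ((1 : ℂ) - s) = (d : ℂ) / (d : ℂ) ^ s from by
        rw [Complex.cpow_sub _ _ hdc, Complex.cpow_one], mul_div_assoc]
  have HeL : LSeriesHasSum
      (fun d => if d ∣ L / f then (ArithmeticFunction.moebius d : ℂ) * ν d else 0) s
      (∏ p ∈ (L / f).primeFactors, (1 - ν p * (p : ℂ) ^ (-s))) := by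
    refine finite_euler (L / f) (hsq.squarefree_of_dvd ((Nat.div_dvd_of_dvd hfL).trans hL))
      hLf0 _ (fun d => ν d * (d : ℂ) ^ (-s)) s ?_ ?_ ?_
    · simp [hν1]
    · intro x y
      show ν (x * y) * ((x * y : ℕ) : ℂ) ^ (-s)
          = (ν x * (x : ℂ) ^ (-s)) * (ν y * (y : ℂ) ^ (-s))
      rw [hνmul, Nat.cast_mul, Complex.natCast_mul_natCast_cpow]
      ring
    · intro d hd0
      show ν d / (d : ℂ) ^ s = ν d * (d : ℂ) ^ (-s)
      rw [Complex.cpow_neg, div_eq_mul_inv]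
  have H3 := (HeM.convolution Hb).convolution (HeL.convolution Hc)
  rw [show (∏ p ∈ (M / f).primeFactors, (1 - ν p * (p : ℂ) ^ ((1 : ℂ) - s)))
        * LSeries ν (s - 1)
        * ((∏ p ∈ (L / f).primeFactors, (1 - ν p * (p : ℂ) ^ (-s))) * LSeries ν s)
      = (∏ p ∈ (M / f).primeFactors, (1 - ν p * (p : ℂ) ^ ((1 : ℂ) - s))) *
        (∏ p ∈ (L / f).primeFactors, (1 - ν p * (p : ℂ) ^ (-s))) *
        LSeries ν (s - 1) * LSeries ν s from by ring] at H3
  -- generic convolution computation with the Möbius factor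
  have conv_lemma : ∀ (N : ℕ) (g : ℕ → ℂ), (∀ x y : ℕ, g (x * y) = g x * g y) →
      ∀ n : ℕ, n ≠ 0 →
      (LSeries.convolution (fun d => if d ∣ N then (ArithmeticFunction.moebius d : ℂ) * g d
          else 0) g) n = if Nat.gcd n N = 1 then g n else 0 := by
    intro N g hg n hn
    rw [LSeries.convolution_def]
    dsimp only
    rw [Nat.sum_divisorsAntidiagonal
      (f := fun x y => (if x ∣ N then (ArithmeticFunction.moebius x : ℂ) * g x else 0) * g y)]
    have step1 : ∀ d ∈ n.divisors,
        (if d ∣ N then (ArithmeticFunction.moebius d : ℂ) * g d else 0) * g (n / d)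
        = if d ∣ N then (ArithmeticFunction.moebius d : ℂ) * g n else 0 := by
      intro d hd
      have hdn := (Nat.mem_divisors.mp hd).1
      by_cases hdvd : d ∣ N
      · rw [if_pos hdvd, if_pos hdvd, mul_assoc, ← hg, Nat.mul_div_cancel' hdn]
      · rw [if_neg hdvd, if_neg hdvd, zero_mul]
    rw [Finset.sum_congr rfl step1, ← Finset.sum_filter]
    have hfilt : n.divisors.filter (fun d => d ∣ N) = (Nat.gcd n N).divisors := by
      ext d
      simp only [Finset.mem_filter, Nat.mem_divisors]
      constructor
      · rintro ⟨⟨h1, -⟩, h2⟩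
        exact ⟨Nat.dvd_gcd h1 h2, Nat.gcd_ne_zero_left hn⟩
      · rintro ⟨h1, -⟩
        exact ⟨⟨h1.trans (Nat.gcd_dvd_left _ _), hn⟩, h1.trans (Nat.gcd_dvd_right _ _)⟩
    rw [hfilt, ← Finset.sum_mul, sum_moebius_indicator]
    split_ifs <;> simp
  -- the two middle functions
  have hBconv : ∀ n : ℕ, n ≠ 0 →
      (LSeries.convolution
        (fun d => if d ∣ M / f then (ArithmeticFunction.moebius d : ℂ) * (ν d * (d : ℂ)) else 0)
        (fun n : ℕ => ν n * (n : ℂ))) n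
      = (if Nat.gcd n (M / f) = 1 then ν n * (n : ℂ) else 0) :=
    conv_lemma (M / f) (fun n : ℕ => ν n * (n : ℂ))
      (fun x y => by
        show ν (x * y) * ((x * y : ℕ) : ℂ) = (ν x * (x : ℂ)) * (ν y * (y : ℂ))
        rw [hνmul, Nat.cast_mul]; ring)
  have hCconv : ∀ n : ℕ, n ≠ 0 →
      (LSeries.convolution
        (fun d => if d ∣ L / f then (ArithmeticFunction.moebius d : ℂ) * ν d else 0) ν) n
      = (if Nat.gcd n (L / f) = 1 then ν n else 0) :=
    conv_lemma (L / f) ν hνmul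
  have hconv_eq : LSeries.convolution
      (LSeries.convolution
        (fun d => if d ∣ M / f then (ArithmeticFunction.moebius d : ℂ) * (ν d * (d : ℂ)) else 0)
        (fun n : ℕ => ν n * (n : ℂ)))
      (LSeries.convolution
        (fun d => if d ∣ L / f then (ArithmeticFunction.moebius d : ℂ) * ν d else 0) ν)
      = LSeries.convolution (fun n => if Nat.gcd n (M / f) = 1 then ν n * (n : ℂ) else 0)
          (fun n => if Nat.gcd n (L / f) = 1 then ν n else 0) :=
    LSeries.convolution_congr (fun {n} hn => hBconv n hn) (fun {n} hn => hCconv n hn)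
  have hBC : ∀ n : ℕ, n ≠ 0 →
      LSeries.convolution (fun n => if Nat.gcd n (M / f) = 1 then ν n * (n : ℂ) else 0)
        (fun n => if Nat.gcd n (L / f) = 1 then ν n else 0) n = a n := by
    intro n hn
    rw [LSeries.convolution_def]
    dsimp only
    rw [Nat.sum_divisorsAntidiagonal
      (f := fun x y => (if Nat.gcd x (M / f) = 1 then ν x * (x : ℂ) else 0) *
        (if Nat.gcd y (L / f) = 1 then ν y else 0))]
    have step1 : ∀ d ∈ n.divisors,
        (if Nat.gcd d (M / f) = 1 then ν d * (d : ℂ) else 0) *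
          (if Nat.gcd (n / d) (L / f) = 1 then ν (n / d) else 0)
        = if Nat.gcd d (M / f) = 1 ∧ Nat.gcd (n / d) (L / f) = 1 then ν n * (d : ℂ) else 0 := by
      intro d hd
      have hdn := (Nat.mem_divisors.mp hd).1
      by_cases h1 : Nat.gcd d (M / f) = 1
      · by_cases h2 : Nat.gcd (n / d) (L / f) = 1
        · rw [if_pos h1, if_pos h2, if_pos ⟨h1, h2⟩]
          have hgν : ν d * ν (n / d) = ν n := by rw [← hνmul, Nat.mul_div_cancel' hdn]
          calc ν d * (d : ℂ) * ν (n / d) = ν d * ν (n / d) * (d : ℂ) := by ring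
            _ = ν n * (d : ℂ) := by rw [hgν]
        · rw [if_pos h1, if_neg h2, if_neg (fun hc : _ ∧ _ => h2 hc.2), mul_zero]
      · rw [if_neg h1, if_neg (fun hc : _ ∧ _ => h1 hc.1), zero_mul]
    rw [Finset.sum_congr rfl step1, ← Finset.sum_filter, ← Finset.mul_sum, ha n hn]
    by_cases hbig : 1 < Nat.gcd n (Nat.gcd M L / f)
    · rw [if_pos hbig, key_empty hsq hD hM0 hL0 hM hL hDML hf0 hf hn hbig,
        Finset.sum_empty, mul_zero]
    · have hgcd : Nat.gcd n (Nat.gcd M L / f) = 1 := by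
        have h0 : Nat.gcd n (Nat.gcd M L / f) ≠ 0 :=
          fun h => hn (Nat.eq_zero_of_gcd_eq_zero_left h)
        omega
      rw [if_neg hbig]
      have hkeyC := congrArg (fun k : ℕ => (k : ℂ))
        (key_sum hsq hD hM0 hL0 hM hL hDML hf0 hf hn hgcd)
      push_cast at hkeyC
      rw [hkeyC]
      ring
  exact (LSeriesHasSum_congr s _ (fun {n} hn => by rw [hconv_eq]; exact (hBC n hn).symm)).mpr H3


end Stmt12Aux

/-- the Dirichlet series of the twisted Eisenstein coefficients
`a(n) = χ(n)η(n)·(∏_{p ∣ D/M} p^{v_p(n)})·σ^{(D/f)}(n)` (vanishing when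
`gcd(n, gcd(M,L)/f) > 1`) converges for `Re(s) > 2` to
`∏_{p ∣ M/f}(1 − χη(p)p^{1−s}) · ∏_{p ∣ L/f}(1 − χη(p)p^{−s}) · L(χη, s−1) · L(χη, s)`. -/
theorem stmt_12 (D C M L : ℕ) (hD : 0 < D) (hsq : Squarefree D) (hC : C ∣ D) (hC0 : 0 < C)
    (hM0 : 0 < M) (hL0 : 0 < L) (hM : M ∣ D) (hL : L ∣ D)
    (hDML : D ∣ M * L) (hMLDC : M * L ∣ D * C)
    (f : ℕ) (hf0 : 0 < f) (hf : f ∣ Nat.gcd M L)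
    (χ : DirichletCharacter ℂ f) (hχprim : χ.IsPrimitive) (hχquad : χ ^ 2 = 1)
    (m : ℕ) (η : DirichletCharacter ℂ m) (hm : Nat.gcd m D = 1)
    (a : ℕ → ℂ)
    (ha : ∀ n : ℕ, a n =
      if 1 < Nat.gcd n (Nat.gcd M L / f) then 0
      else χ (n : ZMod f) * η (n : ZMod m) *
        (∏ p ∈ (D / M).primeFactors, (p : ℂ) ^ (n.factorization p)) *
        (∑ d ∈ n.divisors.filter (fun d => Nat.gcd d (D / f) = 1), (d : ℂ))) :
    ∀ s : ℂ, 2 < s.re →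
      LSeriesHasSum a s
        ((∏ p ∈ (M / f).primeFactors,
            (1 - χ (p : ZMod f) * η (p : ZMod m) * (p : ℂ) ^ ((1 : ℂ) - s))) *
         (∏ p ∈ (L / f).primeFactors,
            (1 - χ (p : ZMod f) * η (p : ZMod m) * (p : ℂ) ^ (-s))) *
         LSeries (fun n : ℕ => χ (n : ZMod f) * η (n : ZMod m)) (s - 1) *
         LSeries (fun n : ℕ => χ (n : ZMod f) * η (n : ZMod m)) s) := by
  intro s hs
  exact Stmt12Aux.main_aux D M L f hsq hD hM0 hL0 hM hL hDML hf0 hf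
    (fun n : ℕ => χ (n : ZMod f) * η (n : ZMod m))
    (by simp)
    (fun x y => by push_cast [map_mul]; ring)
    (fun n => by
      rw [norm_mul]
      calc ‖χ (n : ZMod f)‖ * ‖η (n : ZMod m)‖ ≤ 1 * 1 :=
            mul_le_mul
              (DirichletCharacter.norm_le_one χ _)
              (DirichletCharacter.norm_le_one η _)
              (norm_nonneg _) zero_le_one
        _ = 1 := one_mul 1)
    a (fun n _ => ha n) s hs
end

section
/- Let D be a positive squarefree integer and C a positive divisor of D. Then Σ_{r ∣ D/C} Σ_{s ∣ C} Σ_{t ∣ C, gcd(s,t) = 1} φ(t) = Σ_{d ∣ D·C} φ(gcd(d, D·C/d)), where the left-hand sums run over positive divisors r of D/C and positive divisors s, t of C with gcd(s, t) = 1, and the right-hand sum runs over all positive divisors d of D·C. Here φ is Euler's totient function. -/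
open Finset

private lemma coprime_div_of_squarefree {n d : ℕ} (hsq : Squarefree n) (hd : d ∣ n) :
    Nat.Coprime d (n / d) := by
  obtain ⟨e, rfl⟩ := hd
  have hd0 : d ≠ 0 := by
    rintro rfl
    rw [zero_mul] at hsq
    exact not_squarefree_zero hsq
  rw [Nat.mul_div_cancel_left _ (Nat.pos_of_ne_zero hd0)]
  exact Nat.coprime_of_squarefree_mul hsq

private lemma gcd_mul_mul {a b u v : ℕ} (hab : Nat.Coprime a b)
    (hav : Nat.Coprime a v) (hbu : Nat.Coprime b u) :
    Nat.gcd (a * b) (u * v) = Nat.gcd a u * Nat.gcd b v := by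
  apply Nat.dvd_antisymm
  · have hx : Nat.gcd (a * b) (u * v) ∣ a * b := Nat.gcd_dvd_left _ _
    have h1 : Nat.gcd (Nat.gcd (a * b) (u * v)) a * Nat.gcd (Nat.gcd (a * b) (u * v)) b
        = Nat.gcd (a * b) (u * v) :=
      (Nat.gcd_mul_gcd_eq_iff_dvd_mul_of_coprime hab).2 hx
    rw [← h1]
    apply Nat.mul_dvd_mul
    · refine Nat.dvd_gcd (Nat.gcd_dvd_right _ _) ?_
      have h2 : Nat.gcd (Nat.gcd (a * b) (u * v)) a ∣ u * v :=
        dvd_trans (Nat.gcd_dvd_left _ _) (Nat.gcd_dvd_right _ _)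
      exact (Nat.Coprime.coprime_dvd_left (Nat.gcd_dvd_right _ _) hav).dvd_of_dvd_mul_right h2
    · refine Nat.dvd_gcd (Nat.gcd_dvd_right _ _) ?_
      have h2 : Nat.gcd (Nat.gcd (a * b) (u * v)) b ∣ u * v :=
        dvd_trans (Nat.gcd_dvd_left _ _) (Nat.gcd_dvd_right _ _)
      exact (Nat.Coprime.coprime_dvd_left (Nat.gcd_dvd_right _ _) hbu).dvd_of_dvd_mul_left h2
  · exact Nat.dvd_gcd
      (Nat.mul_dvd_mul (Nat.gcd_dvd_left _ _) (Nat.gcd_dvd_left _ _))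
      (Nat.mul_dvd_mul (Nat.gcd_dvd_right _ _) (Nat.gcd_dvd_right _ _))

private lemma sum_divisors_coprime_mul {m n : ℕ} (hm : m ≠ 0) (hn : n ≠ 0)
    (h : Nat.Coprime m n) (f : ℕ → ℕ) :
    ∑ d ∈ (m * n).divisors, f d
      = ∑ a ∈ m.divisors, ∑ b ∈ n.divisors, f (a * b) := by
  rw [← Finset.sum_product']
  refine Finset.sum_nbij' (fun d => (Nat.gcd d m, Nat.gcd d n)) (fun p => p.1 * p.2)
    ?_ ?_ ?_ ?_ ?_
  · intro d _
    simp only [Finset.mem_product, Nat.mem_divisors]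
    exact ⟨⟨Nat.gcd_dvd_right _ _, hm⟩, ⟨Nat.gcd_dvd_right _ _, hn⟩⟩
  · rintro ⟨a, b⟩ hab
    simp only [Finset.mem_product, Nat.mem_divisors] at hab
    exact Nat.mem_divisors.2 ⟨mul_dvd_mul hab.1.1 hab.2.1, mul_ne_zero hm hn⟩
  · intro d hd
    exact (Nat.gcd_mul_gcd_eq_iff_dvd_mul_of_coprime h).2 (Nat.mem_divisors.1 hd).1
  · rintro ⟨a, b⟩ hab
    simp only [Finset.mem_product, Nat.mem_divisors] at hab
    have ha := hab.1.1
    have hb := hab.2.1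
    have h1 : Nat.gcd (a * b) m = a := by
      rw [Nat.Coprime.gcd_mul_right_cancel a (Nat.Coprime.coprime_dvd_left hb h.symm),
        Nat.gcd_eq_left ha]
    have h2 : Nat.gcd (a * b) n = b := by
      rw [Nat.Coprime.gcd_mul_left_cancel b (Nat.Coprime.coprime_dvd_left ha h),
        Nat.gcd_eq_left hb]
    simp [h1, h2]
  · intro d hd
    congr 1
    exact ((Nat.gcd_mul_gcd_eq_iff_dvd_mul_of_coprime h).2 (Nat.mem_divisors.1 hd).1).symm

private def Hfun (n : ℕ) : ℕ := ∑ d ∈ n.divisors, Nat.totient (Nat.gcd d (n / d))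

private lemma Hmul {m n : ℕ} (hm : m ≠ 0) (hn : n ≠ 0) (h : Nat.Coprime m n) :
    Hfun (m * n) = Hfun m * Hfun n := by
  unfold Hfun
  rw [sum_divisors_coprime_mul hm hn h, Finset.sum_mul_sum]
  refine Finset.sum_congr rfl fun a ha => Finset.sum_congr rfl fun b hb => ?_
  obtain ⟨ha, -⟩ := Nat.mem_divisors.1 ha
  obtain ⟨hb, -⟩ := Nat.mem_divisors.1 hb
  have hdiv : m * n / (a * b) = m / a * (n / b) := (Nat.div_mul_div_comm ha hb).symm
  have hab : Nat.Coprime a b := Nat.Coprime.coprime_dvd_right hb (h.coprime_dvd_left ha)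
  have hav : Nat.Coprime a (n / b) :=
    Nat.Coprime.coprime_dvd_right (Nat.div_dvd_of_dvd hb) (h.coprime_dvd_left ha)
  have hbu : Nat.Coprime b (m / a) :=
    Nat.Coprime.coprime_dvd_right (Nat.div_dvd_of_dvd ha) (h.symm.coprime_dvd_left hb)
  rw [hdiv, gcd_mul_mul hab hav hbu, Nat.totient_mul
    (Nat.Coprime.coprime_dvd_right (Nat.gcd_dvd_left _ _)
      (Nat.Coprime.coprime_dvd_left (Nat.gcd_dvd_left _ _) hab))]

private lemma Hsq : ∀ C : ℕ, Squarefree C →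
    Hfun (C ^ 2) = ∑ t ∈ C.divisors, Nat.totient t * #(C / t).divisors := by
  intro C
  induction C using Nat.recOnPosPrimePosCoprime with
  | prime_pow p n hpp hn =>
    intro hsq
    have hp : Nat.Prime p := hpp
    have hn1 : n = 1 := by
      by_contra hne
      have h2 : 2 ≤ n := by omega
      have hdvd : p * p ∣ p ^ n := by
        have := pow_dvd_pow p h2
        rwa [pow_two] at this
      exact hp.one_lt.ne' (Nat.isUnit_iff.1 (hsq p hdvd))
    subst hn1
    rw [pow_one]
    have lhs : Hfun (p ^ 2) = 1 + (Nat.totient p + 1) := by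
      unfold Hfun
      rw [Nat.sum_divisors_prime_pow hp, Finset.sum_range_succ, Finset.sum_range_succ,
        Finset.sum_range_one]
      have e0 : p ^ 2 / p ^ 0 = p ^ 2 := by simp
      have e1 : p ^ 2 / p ^ 1 = p := by
        rw [Nat.pow_div (by omega) hp.pos, pow_one]
      have e2 : p ^ 2 / p ^ 2 = 1 := Nat.div_self (pow_pos hp.pos 2)
      rw [e0, e1, e2, pow_zero, pow_one]
      have g0 : Nat.gcd 1 (p ^ 2) = 1 := Nat.gcd_one_left _
      have g1 : Nat.gcd p p = p := Nat.gcd_self p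
      have g2 : Nat.gcd (p ^ 2) 1 = 1 := Nat.gcd_one_right _
      rw [g0, g1, g2, Nat.totient_one]
      omega
    have rhs : ∑ t ∈ p.divisors, Nat.totient t * #(p / t).divisors
        = 1 + (Nat.totient p + 1) := by
      rw [hp.divisors]
      have hne : (1 : ℕ) ≠ p := hp.one_lt.ne
      rw [Finset.sum_pair hne]
      have d1 : p / 1 = p := Nat.div_one p
      have d2 : p / p = 1 := Nat.div_self hp.pos
      rw [d1, d2, Nat.totient_one, hp.divisors]
      have hc : #({1, p} : Finset ℕ) = 2 := by
        rw [Finset.card_pair hne]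
      rw [hc]
      simp [Nat.divisors_one]
      omega
    rw [lhs, rhs]
  | zero => exact fun h => absurd h not_squarefree_zero
  | one =>
    intro _
    norm_num [Hfun, Nat.divisors_one]
  | coprime a b ha hb hab iha ihb =>
    intro hsq
    obtain ⟨-, sqa, sqb⟩ := Nat.squarefree_mul_iff.1 hsq
    have ha0 : a ≠ 0 := by omega
    have hb0 : b ≠ 0 := by omega
    have h1 : Hfun ((a * b) ^ 2) = Hfun (a ^ 2) * Hfun (b ^ 2) := by
      rw [mul_pow]
      exact Hmul (pow_ne_zero _ ha0) (pow_ne_zero _ hb0) (Nat.Coprime.pow _ _ hab)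
    rw [h1, iha sqa, ihb sqb, Finset.sum_mul_sum,
      sum_divisors_coprime_mul ha0 hb0 hab]
    refine Finset.sum_congr rfl fun t1 ht1 => Finset.sum_congr rfl fun t2 ht2 => ?_
    obtain ⟨ht1, -⟩ := Nat.mem_divisors.1 ht1
    obtain ⟨ht2, -⟩ := Nat.mem_divisors.1 ht2
    have hcop : Nat.Coprime t1 t2 :=
      Nat.Coprime.coprime_dvd_right ht2 (hab.coprime_dvd_left ht1)
    have hdiv : a * b / (t1 * t2) = a / t1 * (b / t2) := (Nat.div_mul_div_comm ht1 ht2).symm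
    have hcop2 : Nat.Coprime (a / t1) (b / t2) :=
      Nat.Coprime.coprime_dvd_right (Nat.div_dvd_of_dvd ht2)
        (hab.coprime_dvd_left (Nat.div_dvd_of_dvd ht1))
    rw [Nat.totient_mul hcop, hdiv, Nat.Coprime.card_divisors_mul hcop2]
    ring

private lemma lhs_inner (C : ℕ) (hC0 : C ≠ 0) (hsq : Squarefree C) :
    ∑ s ∈ C.divisors, ∑ t ∈ C.divisors.filter (fun t => Nat.gcd s t = 1), Nat.totient t
      = ∑ t ∈ C.divisors, Nat.totient t * #(C / t).divisors := by
  have key : ∀ t ∈ C.divisors,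
      C.divisors.filter (fun s => Nat.gcd s t = 1) = (C / t).divisors := by
    intro t ht
    obtain ⟨htd, -⟩ := Nat.mem_divisors.1 ht
    rw [← Nat.divisors_filter_dvd_of_dvd hC0 (Nat.div_dvd_of_dvd htd)]
    refine Finset.filter_congr fun s hs => ?_
    obtain ⟨hsd, -⟩ := Nat.mem_divisors.1 hs
    constructor
    · intro hg
      have hsC : s ∣ t * (C / t) := by rwa [Nat.mul_div_cancel' htd]
      exact Nat.Coprime.dvd_of_dvd_mul_left hg hsC
    · intro hs'
      exact ((coprime_div_of_squarefree hsq htd).symm.coprime_dvd_left hs')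
  calc
    ∑ s ∈ C.divisors, ∑ t ∈ C.divisors.filter (fun t => Nat.gcd s t = 1), Nat.totient t
        = ∑ s ∈ C.divisors, ∑ t ∈ C.divisors,
            if Nat.gcd s t = 1 then Nat.totient t else 0 := by
          simp [Finset.sum_filter]
    _ = ∑ t ∈ C.divisors, ∑ s ∈ C.divisors,
            if Nat.gcd s t = 1 then Nat.totient t else 0 := Finset.sum_comm
    _ = ∑ t ∈ C.divisors, Nat.totient t * #(C / t).divisors := by
          refine Finset.sum_congr rfl fun t ht => ?_
          rw [← Finset.sum_filter, key t ht, Finset.sum_const, smul_eq_mul, mul_comm]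

/-- for `D` a positive squarefree integer and `C` a positive divisor of `D`,
`Σ_{r ∣ D/C} Σ_{s ∣ C} Σ_{t ∣ C, gcd(s,t)=1} φ(t) = Σ_{d ∣ D·C} φ(gcd(d, D·C/d))`. -/
theorem stmt_15 (D C : ℕ) (hD : 0 < D) (hsq : Squarefree D) (hC : C ∣ D) (hC0 : 0 < C) :
    ∑ r ∈ (D / C).divisors, ∑ s ∈ C.divisors,
        ∑ t ∈ C.divisors.filter (fun t => Nat.gcd s t = 1), Nat.totient t =
      ∑ d ∈ (D * C).divisors, Nat.totient (Nat.gcd d (D * C / d)) := by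
  set M := D / C with hMdef
  have hM : C * M = D := Nat.mul_div_cancel' hC
  have hC0' : C ≠ 0 := hC0.ne'
  have hM0 : M ≠ 0 := by
    intro h
    rw [h, mul_zero] at hM
    omega
  have hsqC : Squarefree C := hsq.squarefree_of_dvd hC
  have hsqM : Squarefree M := hsq.squarefree_of_dvd ⟨C, by rw [← hM, mul_comm]⟩
  have hcop : Nat.Coprime M C := by
    have : Squarefree (C * M) := by rwa [hM]
    exact (Nat.coprime_of_squarefree_mul this).symm
  have hDC : D * C = M * C ^ 2 := by
    rw [← hM]; ring
  have hrhs : ∑ d ∈ (D * C).divisors, Nat.totient (Nat.gcd d (D * C / d))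
      = Hfun M * Hfun (C ^ 2) := by
    rw [hDC]
    exact Hmul hM0 (pow_ne_zero _ hC0') (hcop.pow_right _)
  have hHM : Hfun M = #M.divisors := by
    unfold Hfun
    rw [Finset.card_eq_sum_ones]
    refine Finset.sum_congr rfl fun d hd => ?_
    rw [coprime_div_of_squarefree hsqM (Nat.mem_divisors.1 hd).1, Nat.totient_one]
  rw [hrhs, hHM, Hsq C hsqC]
  rw [Finset.sum_congr rfl fun _r (_ : _r ∈ M.divisors) => lhs_inner C hC0' hsqC]
  rw [Finset.sum_const, smul_eq_mul]
end
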